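/- arXiv:2408.10626 — 3 statements merged into one kernel-verified Lean document; each statement's English description precedes it below -/
import Mathlib

section
/- Let t = (t_1, …, t_ℓ) ∈ A_e^ℓ, let σ be a permutation of {1, …, ℓ} and v = (v_1, …, v_ℓ) ∈ ℤ^ℓ, and suppose t^{σv} := (t_{σ(1)} + e·v_1, …, t_{σ(ℓ)} + e·v_ℓ) ∈ Ā_e^ℓ. Then there exist a ∈ ℤ and b ∈ {0, 1, …, ℓ−1} such that v = v(a, b) and σ·ρ^{−b} lies in the subgroup of S_ℓ generated by the adjacent transpositions (k, k+1) for those k ∈ {1, …, ℓ−1} with t_k = t_{k+1}. -/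
/-- A β-set: a subset of ℤ having a maximum element, whose complement has a minimum element. -/
def IsBetaSet (B : Set ℤ) : Prop :=
  (∃ m ∈ B, ∀ x ∈ B, x ≤ m) ∧ (∃ m, m ∉ B ∧ ∀ x, x ∉ B → m ≤ x)

/-- The charge s(B) = |B ∩ ℤ≥0| − |ℤ<0 ∖ B| of a β-set. -/
noncomputable def charge (B : Set ℤ) : ℤ :=
  ((B ∩ {x : ℤ | 0 ≤ x}).ncard : ℤ) - (({x : ℤ | x < 0} \ B).ncard : ℤ)

/-- B^{+k} = {x + k : x ∈ B}. -/
def shiftSet (B : Set ℤ) (k : ℤ) : Set ℤ := (fun x => x + k) '' B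

/-- δ_i(B) for i ∈ ℤ/eℤ. -/
noncomputable def deltaOf (e : ℕ) (i : ZMod e) (B : Set ℤ) : ℤ :=
  ({x : ℤ | x ∈ B ∧ (x : ZMod e) = i ∧ x - 1 ∉ B}.ncard : ℤ)
    - ({x : ℤ | x ∈ B ∧ (x : ZMod e) = i - 1 ∧ x + 1 ∉ B}.ncard : ℤ)

/-- The i-th component B_i = {a : ae + i ∈ B} of the e-quotient of B. -/
def quotComp (e : ℕ) (B : Set ℤ) (i : ℕ) : Set ℤ :=
  {a : ℤ | a * (e : ℤ) + (i : ℤ) ∈ B}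

/-- The e-core of B: ⋃_{i<e} {ae + i : a < s(B_i)}. -/
noncomputable def coreSet (e : ℕ) (B : Set ℤ) : Set ℤ :=
  {x : ℤ | ∃ i < e, ∃ a : ℤ, a < charge (quotComp e B i) ∧ x = a * (e : ℤ) + (i : ℤ)}

/-- The e-weight of B: for each quotient component C = B_i, the a-th term
b_{ia} − s(C) + a equals the number of y ∉ C below the a-th bead b_{ia}, so the inner sum
counts the pairs (x, y) with x ∈ C, y ∉ C, y < x. -/
noncomputable def wtSet (e : ℕ) (B : Set ℤ) : ℕ :=
  ∑ i ∈ Finset.range e,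
    {p : ℤ × ℤ | p.1 ∈ quotComp e B i ∧ p.2 ∉ quotComp e B i ∧ p.2 < p.1}.ncard

/-- υ_j(ae + b) = aeℓ + (ℓ−j)e + b. -/
def upsilon (e ℓ j : ℕ) (x : ℤ) : ℤ :=
  (x - x % (e : ℤ)) * (ℓ : ℤ) + ((ℓ : ℤ) - (j : ℤ)) * (e : ℤ) + x % (e : ℤ)

/-- The Uglov map U(B^{(1)}, …, B^{(ℓ)}) = ⋃_j υ_j(B^{(j)}) (the j-th component of the
tuple, indexed by Fin ℓ, is B^{(j+1)} of the paper). -/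
def uglovU (e ℓ : ℕ) (B : Fin ℓ → Set ℤ) : Set ℤ :=
  ⋃ j : Fin ℓ, upsilon e ℓ (j.1 + 1) '' (B j)

/-- A partition, as a weakly decreasing eventually-zero function ℕ → ℕ
(the value at a being λ_{a+1}). -/
def IsPartitionFun (p : ℕ → ℕ) : Prop :=
  (∀ a b : ℕ, a ≤ b → p b ≤ p a) ∧ ∃ N, ∀ n, N ≤ n → p n = 0

/-- β_t(λ) = {λ_a + t − a : a ≥ 1}. -/
def betaOf (p : ℕ → ℕ) (t : ℤ) : Set ℤ :=
  {x : ℤ | ∃ a : ℕ, x = (p a : ℤ) + t - ((a : ℤ) + 1)}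

-- β⁻¹(B): the unique partition λ with β_{s(B)}(λ) = B (junk value if none exists).
open Classical in
noncomputable def betaInv (B : Set ℤ) : ℕ → ℕ :=
  if h : ∃ p : ℕ → ℕ, IsPartitionFun p ∧ betaOf p (charge B) = B then h.choose
  else fun _ => 0

/-- U(β_t(λ)) for an ℓ-partition λ and multicharge t. -/
def uglovMulti (e ℓ : ℕ) (Λ : Fin ℓ → ℕ → ℕ) (t : Fin ℓ → ℤ) : Set ℤ :=
  uglovU e ℓ (fun j => betaOf (Λ j) (t j))

/-- U(λ; t) = β⁻¹(U(β_t(λ))). -/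
noncomputable def uglovPart (e ℓ : ℕ) (Λ : Fin ℓ → ℕ → ℕ) (t : Fin ℓ → ℤ) : ℕ → ℕ :=
  betaInv (uglovMulti e ℓ Λ t)

/-- core_e(λ; t) = β⁻¹(core_e(U(β_t(λ)))). -/
noncomputable def corePart (e ℓ : ℕ) (Λ : Fin ℓ → ℕ → ℕ) (t : Fin ℓ → ℤ) : ℕ → ℕ :=
  betaInv (coreSet e (uglovMulti e ℓ Λ t))

/-- wt_e(λ; t) = wt_e(U(β_t(λ))). -/
noncomputable def wtPart (e ℓ : ℕ) (Λ : Fin ℓ → ℕ → ℕ) (t : Fin ℓ → ℤ) : ℕ :=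
  wtSet e (uglovMulti e ℓ Λ t)

/-- t ∈ Ā_e^ℓ : t is weakly increasing with last entry at most first entry + e. -/
def memAbar (e : ℕ) {ℓ : ℕ} (t : Fin ℓ → ℤ) : Prop :=
  Monotone t ∧ ∀ i j : Fin ℓ, t j ≤ t i + (e : ℤ)

/-- t ∈ A_e^ℓ : t is weakly increasing with last entry at most first entry + e − 1. -/
def memA (e : ℕ) {ℓ : ℕ} (t : Fin ℓ → ℤ) : Prop :=
  Monotone t ∧ ∀ i j : Fin ℓ, t j ≤ t i + (e : ℤ) - 1

/-- δ_i^t(λ) = Σ_j δ_i(β_{t_j}(λ^{(j)})). -/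
noncomputable def deltaMulti (e ℓ : ℕ) (Λ : Fin ℓ → ℕ → ℕ) (t : Fin ℓ → ℤ) (i : ZMod e) : ℤ :=
  ∑ j : Fin ℓ, deltaOf e i (betaOf (Λ j) (t j))

/-- The Young diagram [λ] of an ℓ-partition, as a set of nodes (a, b, j). -/
def youngSet (ℓ : ℕ) (Λ : Fin ℓ → ℕ → ℕ) : Set (ℕ × ℕ × Fin ℓ) :=
  {x | 1 ≤ x.1 ∧ 1 ≤ x.2.1 ∧ x.2.1 ≤ Λ x.2.2 (x.1 - 1)}

/-- The multiplicity of i ∈ ℤ/eℤ in the residue multiset res_e^t(λ). -/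
noncomputable def resCount (e ℓ : ℕ) (Λ : Fin ℓ → ℕ → ℕ) (t : Fin ℓ → ℤ) (i : ZMod e) : ℕ :=
  {x : ℕ × ℕ × Fin ℓ | x ∈ youngSet ℓ Λ ∧
    (((x.2.1 : ℤ) - (x.1 : ℤ) + t x.2.2 : ℤ) : ZMod e) = i}.ncard

/-- The set of e-weights over the Ŵ_ℓ-orbit of (λ; t). -/
noncomputable def orbitWeights (e ℓ : ℕ) (Λ : Fin ℓ → ℕ → ℕ) (t : Fin ℓ → ℤ) : Set ℕ :=
  {n : ℕ | ∃ σ : Equiv.Perm (Fin ℓ), ∃ v : Fin ℓ → ℤ,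
    n = wtPart e ℓ (fun j => Λ (σ j)) (fun j => t (σ j) + (e : ℤ) * v j)}


private lemma fin_mono_of_step {ℓ : ℕ} {α : Type*} [Preorder α] {g : Fin ℓ → α}
    (h : ∀ (k : ℕ) (hk : k + 1 < ℓ), g ⟨k, Nat.lt_of_succ_lt hk⟩ ≤ g ⟨k + 1, hk⟩) :
    Monotone g := by
  have key : ∀ d : ℕ, ∀ i j : Fin ℓ, i.1 + d = j.1 → g i ≤ g j := by
    intro d
    induction d with
    | zero =>
      intro i j hij
      have : i = j := Fin.ext (show i.1 = j.1 by omega)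
      rw [this]
    | succ d ihd =>
      intro i j hij
      have hk : i.1 + d + 1 < ℓ := by have := j.2; omega
      refine le_trans (ihd i ⟨i.1 + d, Nat.lt_of_succ_lt hk⟩ rfl) ?_
      have h2 := h (i.1 + d) hk
      have hj : (⟨i.1 + d + 1, hk⟩ : Fin ℓ) = j := Fin.ext (show i.1 + d + 1 = j.1 by omega)
      rwa [hj] at h2
  intro i j hij
  have h' : i.1 ≤ j.1 := hij
  exact key (j.1 - i.1) i j (by omega)

private lemma fin_strictMono_of_step {ℓ : ℕ} {α : Type*} [Preorder α] {g : Fin ℓ → α}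
    (h : ∀ (k : ℕ) (hk : k + 1 < ℓ), g ⟨k, Nat.lt_of_succ_lt hk⟩ < g ⟨k + 1, hk⟩) :
    StrictMono g := by
  have key : ∀ d : ℕ, ∀ i j : Fin ℓ, i.1 + d + 1 = j.1 → g i < g j := by
    intro d
    induction d with
    | zero =>
      intro i j hij
      have hk : i.1 + 1 < ℓ := by have := j.2; omega
      have h2 := h i.1 hk
      have hi : (⟨i.1, Nat.lt_of_succ_lt hk⟩ : Fin ℓ) = i := Fin.ext rfl
      have hj : (⟨i.1 + 1, hk⟩ : Fin ℓ) = j := Fin.ext (show i.1 + 1 = j.1 by omega)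
      rwa [hi, hj] at h2
    | succ d ihd =>
      intro i j hij
      have hk : i.1 + d + 1 + 1 < ℓ := by have := j.2; omega
      refine lt_trans (ihd i ⟨i.1 + d + 1, Nat.lt_of_succ_lt hk⟩ rfl) ?_
      have h2 := h (i.1 + d + 1) hk
      have hj : (⟨i.1 + d + 1 + 1, hk⟩ : Fin ℓ) = j := Fin.ext (show i.1 + d + 1 + 1 = j.1 by omega)
      rwa [hj] at h2
  intro i j hij
  have h' : i.1 < j.1 := hij
  exact key (j.1 - i.1 - 1) i j (by omega)

private lemma swap_lt_swap {ℓ : ℕ} {k : ℕ} (hk : k + 1 < ℓ) {i j : Fin ℓ}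
    (hij : i < j) (hne : ¬(i.1 = k ∧ j.1 = k + 1)) :
    Equiv.swap ⟨k, Nat.lt_of_succ_lt hk⟩ ⟨k + 1, hk⟩ i
      < Equiv.swap ⟨k, Nat.lt_of_succ_lt hk⟩ ⟨k + 1, hk⟩ j := by
  have hiv : i.1 < j.1 := hij
  rw [Equiv.swap_apply_def, Equiv.swap_apply_def]
  split_ifs <;>
    simp only [Fin.lt_def, Fin.ext_iff, Fin.mk_lt_mk] at * <;> omega

private def invCnt {ℓ : ℕ} (π : Equiv.Perm (Fin ℓ)) : Finset (Fin ℓ × Fin ℓ) :=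
  Finset.univ.filter (fun p => p.1 < p.2 ∧ π p.2 < π p.1)

private lemma mem_invCnt {ℓ : ℕ} (π : Equiv.Perm (Fin ℓ)) (p : Fin ℓ × Fin ℓ) :
    p ∈ invCnt π ↔ p.1 < p.2 ∧ π p.2 < π p.1 := by
  simp [invCnt]

private lemma stab_mem {ℓ : ℕ} (t : Fin ℓ → ℤ) (ht : Monotone t) :
    ∀ (n : ℕ) (π : Equiv.Perm (Fin ℓ)), (invCnt π).card = n →
      (∀ j, t (π j) = t j) →
      π ∈ Subgroup.closure {τ : Equiv.Perm (Fin ℓ) | ∃ k : ℕ, ∃ hk : k + 1 < ℓ,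
          t ⟨k, Nat.lt_of_succ_lt hk⟩ = t ⟨k + 1, hk⟩ ∧
          τ = Equiv.swap ⟨k, Nat.lt_of_succ_lt hk⟩ ⟨k + 1, hk⟩} := by
  intro n
  induction n using Nat.strong_induction_on with
  | _ n ih =>
  intro π hn hπ
  by_cases hd : ∀ (k : ℕ) (hk : k + 1 < ℓ), π ⟨k, Nat.lt_of_succ_lt hk⟩ < π ⟨k + 1, hk⟩
  · have hsm : StrictMono ⇑π := fin_strictMono_of_step hd
    have hinv : StrictMono ⇑π⁻¹ := by
      intro a b hab
      rcases lt_trichotomy (π⁻¹ a) (π⁻¹ b) with h | h | h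
      · exact h
      · exact absurd hab (by rw [show a = b from by
          have := congrArg π h
          simpa [Equiv.Perm.coe_inv, Equiv.apply_symm_apply] using this]; exact lt_irrefl b)
      · have h2 := hsm h
        simp only [Equiv.Perm.coe_inv, Equiv.apply_symm_apply] at h2
        exact absurd hab (asymm h2)
    have hone : π = 1 := by
      apply Equiv.ext
      intro j
      have h1 : j ≤ π j := @StrictMono.le_apply (Fin ℓ) _ Finite.to_wellFoundedLT _ hsm j
      have h2 : j ≤ π⁻¹ j := @StrictMono.le_apply (Fin ℓ) _ Finite.to_wellFoundedLT _ hinv j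
      have h3 : π j ≤ π (π⁻¹ j) := hsm.monotone h2
      simp only [Equiv.Perm.coe_inv, Equiv.apply_symm_apply] at h3
      exact le_antisymm h3 h1
    rw [hone]; exact Subgroup.one_mem _
  · push_neg at hd
    obtain ⟨k, hk, hkd⟩ := hd
    have hKlt : (⟨k, Nat.lt_of_succ_lt hk⟩ : Fin ℓ) < ⟨k + 1, hk⟩ := by
      simp [Fin.lt_def]
    set K : Fin ℓ := ⟨k, Nat.lt_of_succ_lt hk⟩ with hK
    set K1 : Fin ℓ := ⟨k + 1, hk⟩ with hK1
    have hneq : K1 ≠ K := by simp [hK, hK1, Fin.ext_iff]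
    have hdes : π K1 < π K :=
      lt_of_le_of_ne hkd (fun hEq => hneq (π.injective hEq))
    have htKK : t K = t K1 := by
      have h1 : t K ≤ t K1 := ht hKlt.le
      have h2 : t K1 ≤ t K := by
        have h3 := ht hdes.le
        rwa [hπ K1, hπ K] at h3
      exact le_antisymm h1 h2
    set s : Equiv.Perm (Fin ℓ) := Equiv.swap K K1 with hs
    have hsS : s ∈ {τ : Equiv.Perm (Fin ℓ) | ∃ k : ℕ, ∃ hk : k + 1 < ℓ,
        t ⟨k, Nat.lt_of_succ_lt hk⟩ = t ⟨k + 1, hk⟩ ∧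
        τ = Equiv.swap ⟨k, Nat.lt_of_succ_lt hk⟩ ⟨k + 1, hk⟩} := ⟨k, hk, htKK, rfl⟩
    have hts : ∀ j, t (s j) = t j := by
      intro j
      rcases eq_or_ne j K with rfl | hjK
      · rw [hs, Equiv.swap_apply_left]; exact htKK.symm
      rcases eq_or_ne j K1 with rfl | hjK1
      · rw [hs, Equiv.swap_apply_right]; exact htKK
      · rw [hs, Equiv.swap_apply_of_ne_of_ne hjK hjK1]
    have hπ' : ∀ j, t ((π * s) j) = t j := fun j => (hπ (s j)).trans (hts j)
    have hmem : (K, K1) ∈ invCnt π := (mem_invCnt π _).2 ⟨hKlt, hdes⟩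
    have hφ : ∀ p ∈ invCnt (π * s), (s p.1, s p.2) ∈ (invCnt π).erase (K, K1) := by
      rintro ⟨i, j⟩ hp
      rw [mem_invCnt] at hp
      obtain ⟨hij, hval⟩ := hp
      have hval' : π (s j) < π (s i) := hval
      have hpne : ¬(i.1 = k ∧ j.1 = k + 1) := by
        rintro ⟨hi, hj⟩
        have hiK : i = K := Fin.ext hi
        have hjK : j = K1 := Fin.ext hj
        rw [hiK, hjK, hs, Equiv.swap_apply_left, Equiv.swap_apply_right] at hval'
        exact absurd hval' (asymm hdes)
      have hslt : s i < s j := swap_lt_swap hk hij hpne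
      have hne2 : (s i, s j) ≠ (K, K1) := by
        intro hEq
        have e1 : s i = K := congrArg Prod.fst hEq
        have e2 : s j = K1 := congrArg Prod.snd hEq
        have hi' : i = K1 := by
          have h5 := congrArg s e1
          rwa [hs, Equiv.swap_apply_self, Equiv.swap_apply_left] at h5
        have hj' : j = K := by
          have h5 := congrArg s e2
          rwa [hs, Equiv.swap_apply_self, Equiv.swap_apply_right] at h5
        rw [hi', hj'] at hij
        exact absurd hij (asymm hKlt)
      exact Finset.mem_erase.2 ⟨hne2, (mem_invCnt π _).2 ⟨hslt, hval'⟩⟩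
    have hinj : Set.InjOn (fun p : Fin ℓ × Fin ℓ => (s p.1, s p.2)) (invCnt (π * s)) := by
      intro p _ q _ hpq
      have h1 := congrArg Prod.fst hpq
      have h2 := congrArg Prod.snd hpq
      simp only at h1 h2
      exact Prod.ext (s.injective h1) (s.injective h2)
    have hcard : (invCnt (π * s)).card < n := by
      calc (invCnt (π * s)).card
          = ((invCnt (π * s)).image (fun p => (s p.1, s p.2))).card :=
            (Finset.card_image_of_injOn hinj).symm
        _ ≤ ((invCnt π).erase (K, K1)).card := Finset.card_le_card (by
              intro q hq
              obtain ⟨p, hp, rfl⟩ := Finset.mem_image.1 hq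
              exact hφ p hp)
        _ < (invCnt π).card := Finset.card_erase_lt_of_mem hmem
        _ = n := hn
    have hmem' := ih _ hcard (π * s) rfl hπ'
    have hfin : π = (π * s) * s := by
      rw [mul_assoc, hs, Equiv.swap_mul_self, mul_one]
    rw [hfin]
    exact Subgroup.mul_mem _ hmem' (Subgroup.subset_closure hsS)

open Fin.NatCast in
set_option maxHeartbeats 2000000 in
/-- if t ∈ A_e^ℓ and t^{σv} ∈ Ā_e^ℓ, then v = v(a,b) for some a ∈ ℤ,
b ∈ {0,…,ℓ−1}, and σ·ρ^{−b} lies in the subgroup generated by the adjacent transpositions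
(k, k+1) with t_k = t_{k+1}.  (Positions are 0-indexed by Fin ℓ; ρ = finRotate ℓ is the
ℓ-cycle i ↦ i + 1; v(a,b) has its first ℓ−b entries equal to a and the last b equal to a+1.) -/
theorem stmt15 (e ℓ : ℕ) (he : 2 ≤ e) (hl : 1 ≤ ℓ) (t : Fin ℓ → ℤ) (ht : memA e t)
    (σ : Equiv.Perm (Fin ℓ)) (v : Fin ℓ → ℤ)
    (h : memAbar e (fun j => t (σ j) + (e : ℤ) * v j)) :
    ∃ a : ℤ, ∃ b : ℕ, b ≤ ℓ - 1 ∧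
      v = (fun j : Fin ℓ => if j.1 < ℓ - b then a else a + 1) ∧
      σ * ((finRotate ℓ)⁻¹) ^ b ∈ Subgroup.closure
        {τ : Equiv.Perm (Fin ℓ) | ∃ k : ℕ, ∃ hk : k + 1 < ℓ,
          t ⟨k, Nat.lt_of_succ_lt hk⟩ = t ⟨k + 1, hk⟩ ∧
          τ = Equiv.swap ⟨k, Nat.lt_of_succ_lt hk⟩ ⟨k + 1, hk⟩} := by
  obtain ⟨m, rfl⟩ : ∃ m, ℓ = m + 1 := ⟨ℓ - 1, by omega⟩
  have htA : Monotone t ∧ ∀ i j : Fin (m+1), t j ≤ t i + (e : ℤ) - 1 := ht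
  have hA : Monotone (fun j => t (σ j) + (e : ℤ) * v j) ∧
      ∀ i j : Fin (m+1), (fun j => t (σ j) + (e : ℤ) * v j) j ≤
        (fun j => t (σ j) + (e : ℤ) * v j) i + (e : ℤ) := h
  obtain ⟨ht1, ht2⟩ := htA
  obtain ⟨hu1, hu2⟩ := hA
  have he0 : (0 : ℤ) < (e : ℤ) := by exact_mod_cast (by omega : 0 < e)
  have hu1' : ∀ p q : Fin (m+1), p ≤ q →
      t (σ p) + (e:ℤ) * v p ≤ t (σ q) + (e:ℤ) * v q := fun p q hpq => hu1 hpq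
  have hu2' : ∀ p q : Fin (m+1),
      t (σ q) + (e:ℤ) * v q ≤ t (σ p) + (e:ℤ) * v p + e := fun p q => hu2 p q
  -- v is monotone
  have hvm : Monotone v := by
    intro p q hpq
    have h1 := hu1' p q hpq
    have h2 := ht2 (σ p) (σ q)
    by_contra hlt
    push_neg at hlt
    have h4 : (e:ℤ) * (v q + 1) ≤ (e:ℤ) * v p :=
      mul_le_mul_of_nonneg_left (by omega) he0.le
    rw [mul_add, mul_one] at h4
    linarith
  have hl0 : (0:ℕ) < m + 1 := Nat.succ_pos m
  set z : Fin (m+1) := ⟨0, hl0⟩ with hz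
  set a := v z with ha
  have hva : ∀ j : Fin (m+1), a ≤ v j ∧ v j ≤ a + 1 := by
    intro j
    constructor
    · exact hvm (show z ≤ j from Nat.zero_le _)
    · have h1 := hu2' z j
      have h2 := ht2 (σ j) (σ z)
      by_contra hgt
      push_neg at hgt
      have h4 : (e:ℤ) * (a + 2) ≤ (e:ℤ) * v j :=
        mul_le_mul_of_nonneg_left (by omega) he0.le
      rw [mul_add] at h4
      linarith
  obtain ⟨c, hcdef⟩ : ∃ c, (Finset.univ.filter (fun j : Fin (m+1) => v j = a)).card = c :=
    ⟨_, rfl⟩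
  have hc1 : 1 ≤ c := by
    have hmem : z ∈ Finset.univ.filter (fun j : Fin (m+1) => v j = a) := by
      simp [ha]
    have h5 := Finset.card_pos.2 ⟨z, hmem⟩
    rw [hcdef] at h5
    omega
  have hcl : c ≤ m + 1 := by
    have h5 := Finset.card_filter_le (Finset.univ : Finset (Fin (m+1)))
      (fun j => v j = a)
    rw [hcdef] at h5
    simpa using h5
  have hvc : ∀ j : Fin (m+1), v j = a ↔ j.1 < c := by
    intro j
    constructor
    · intro hj
      have hsub : Finset.Iic j ⊆ Finset.univ.filter (fun k : Fin (m+1) => v k = a) := by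
        intro x hx
        simp only [Finset.mem_Iic] at hx
        simp only [Finset.mem_filter, Finset.mem_univ, true_and]
        have h1 := hvm hx
        have h2 := (hva x).1
        omega
      have hcard := Finset.card_le_card hsub
      rw [Fin.card_Iic, hcdef] at hcard
      omega
    · intro hj
      by_contra hne
      have hsub : Finset.univ.filter (fun k : Fin (m+1) => v k = a) ⊆ Finset.Iio j := by
        intro x hx
        simp only [Finset.mem_filter, Finset.mem_univ, true_and] at hx
        simp only [Finset.mem_Iio]
        by_contra hxj
        push_neg at hxj
        have h1 := hvm hxj
        have h2 := (hva j).1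
        omega
      have hcard := Finset.card_le_card hsub
      rw [hcdef, Fin.card_Iio] at hcard
      omega
  have hvB : ∀ j : Fin (m+1), ¬ j.1 < c → v j = a + 1 := by
    intro j hj
    have h1 := hva j
    have h2 : v j ≠ a := fun hh => hj ((hvc j).1 hh)
    omega
  refine ⟨a, (m + 1) - c, by omega, ?_, ?_⟩
  · funext j
    rw [show m + 1 - (m + 1 - c) = c by omega]
    split_ifs with hj
    · exact (hvc j).2 hj
    · exact hvB j hj
  · set b := m + 1 - c with hbdef
    -- rotation formulas
    have hrot : ∀ (n : ℕ) (j : Fin (m+1)),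
        ((finRotate (m+1)) ^ n) j = j + (n : Fin (m+1)) := by
      intro n
      induction n with
      | zero => intro j; simp
      | succ n ihn =>
        intro j
        rw [pow_succ, Equiv.Perm.mul_apply, finRotate_succ_apply, ihn]
        push_cast
        abel
    have hcb0 : (c : Fin (m+1)) + (b : Fin (m+1)) = 0 := by
      rw [← Nat.cast_add, show c + b = m + 1 by omega]
      exact Fin.natCast_self (m+1)
    have hinvrot : ∀ j : Fin (m+1),
        (((finRotate (m+1))⁻¹) ^ b) j = j + (c : Fin (m+1)) := by
      intro j
      rw [inv_pow]
      have h0 : ((finRotate (m+1)) ^ b) (j + (c : Fin (m+1))) = j := by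
        rw [hrot, add_assoc, hcb0, add_zero]
      calc ((finRotate (m+1)) ^ b)⁻¹ j
          = ((finRotate (m+1)) ^ b)⁻¹ (((finRotate (m+1)) ^ b) (j + (c : Fin (m+1)))) := by
            rw [h0]
        _ = j + (c : Fin (m+1)) := Equiv.symm_apply_apply _ _
    set π := σ * ((finRotate (m+1))⁻¹) ^ b with hπdef
    have hπap : ∀ j, π j = σ (j + (c : Fin (m+1))) := by
      intro j
      rw [hπdef, Equiv.Perm.mul_apply, hinvrot]
    have hadd : ∀ (k : ℕ) (hk : k < m + 1),
        ((⟨k, hk⟩ : Fin (m+1)) + (c : Fin (m+1)))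
          = ⟨(k + c) % (m+1), Nat.mod_lt _ hl0⟩ := by
      intro k hk
      apply Fin.ext
      rw [Fin.add_def]
      show (k + c % (m+1)) % (m+1) = (k + c) % (m+1)
      rw [Nat.add_mod_mod]
    -- two comparison keys
    have key1 : ∀ p q : Fin (m+1), v p = v q → p ≤ q → t (σ p) ≤ t (σ q) := by
      intro p q hv hpq
      have h1 := hu1' p q hpq
      rw [hv] at h1
      linarith
    have key3 : ∀ p q : Fin (m+1), v p = a + 1 → v q = a → t (σ p) ≤ t (σ q) := by
      intro p q hp hq
      have h1 := hu2' q p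
      rw [hp, hq, mul_add, mul_one] at h1
      linarith
    have hstep : ∀ (k : ℕ) (hk : k + 1 < m + 1),
        t (π ⟨k, Nat.lt_of_succ_lt hk⟩) ≤ t (π ⟨k+1, hk⟩) := by
      intro k hk
      rw [hπap, hπap, hadd k (Nat.lt_of_succ_lt hk), hadd (k+1) hk]
      rcases lt_trichotomy (k + 1 + c) (m + 1) with hcase | hcase | hcase
      · have e1 : (⟨(k + c) % (m+1), Nat.mod_lt _ hl0⟩ : Fin (m+1)) = ⟨k + c, by omega⟩ :=
          Fin.ext (Nat.mod_eq_of_lt (by omega))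
        have e2 : (⟨(k + 1 + c) % (m+1), Nat.mod_lt _ hl0⟩ : Fin (m+1))
            = ⟨k + 1 + c, by omega⟩ := Fin.ext (Nat.mod_eq_of_lt (by omega))
        rw [e1, e2]
        refine key1 _ _ ?_ (show k + c ≤ k + 1 + c by omega)
        rw [hvB ⟨k + c, by omega⟩ (show ¬ (k + c < c) by omega),
          hvB ⟨k + 1 + c, by omega⟩ (show ¬ (k + 1 + c < c) by omega)]
      · have e1 : (⟨(k + c) % (m+1), Nat.mod_lt _ hl0⟩ : Fin (m+1)) = ⟨k + c, by omega⟩ :=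
          Fin.ext (Nat.mod_eq_of_lt (by omega))
        have e2 : (⟨(k + 1 + c) % (m+1), Nat.mod_lt _ hl0⟩ : Fin (m+1))
            = ⟨0, hl0⟩ := Fin.ext (show (k + 1 + c) % (m+1) = 0 from by
              rw [hcase]; exact Nat.mod_self _)
        rw [e1, e2]
        refine key3 _ _ ?_ ?_
        · exact hvB ⟨k + c, by omega⟩ (show ¬ (k + c < c) by omega)
        · exact (hvc ⟨0, hl0⟩).2 (show (0:ℕ) < c by omega)
      · have e1 : (⟨(k + c) % (m+1), Nat.mod_lt _ hl0⟩ : Fin (m+1))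
            = ⟨k + c - (m+1), by omega⟩ := Fin.ext (show (k + c) % (m+1) = k + c - (m+1) from by
              rw [Nat.mod_eq_sub_mod (by omega)]; exact Nat.mod_eq_of_lt (by omega))
        have e2 : (⟨(k + 1 + c) % (m+1), Nat.mod_lt _ hl0⟩ : Fin (m+1))
            = ⟨k + 1 + c - (m+1), by omega⟩ :=
          Fin.ext (show (k + 1 + c) % (m+1) = k + 1 + c - (m+1) from by
              rw [Nat.mod_eq_sub_mod (by omega)]; exact Nat.mod_eq_of_lt (by omega))
        rw [e1, e2]
        refine key1 _ _ ?_ (show k + c - (m+1) ≤ k + 1 + c - (m+1) by omega)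
        rw [(hvc ⟨k + c - (m+1), by omega⟩).2 (show k + c - (m+1) < c by omega),
          (hvc ⟨k + 1 + c - (m+1), by omega⟩).2 (show k + 1 + c - (m+1) < c by omega)]
    have hmono : Monotone (t ∘ ⇑π) := fin_mono_of_step (g := t ∘ ⇑π) hstep
    have hsorteq : t ∘ ⇑π = t := by
      have h1 := (Tuple.comp_sort_eq_comp_iff_monotone (f := t) (σ := π)).2 hmono
      rw [Tuple.sort_eq_refl_iff_monotone.2 ht1] at h1
      simpa using h1
    exact stab_mem t ht1 _ π rfl (fun j => congrFun hsorteq j)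
end

section
/- Let λ be an ℓ-partition and t ∈ ℤ^ℓ a multicharge, and suppose (μ; u) lies in the Ŵ_ℓ-orbit of (λ; t), i.e. μ = λ^{σv} and u = t^{σv} for some permutation σ of {1, …, ℓ} and some v ∈ ℤ^ℓ. Then core_e(μ; u) = core_e(λ; t). -/
namespace Stmt16Aux

lemma mem_shiftSet {B : Set ℤ} {k x : ℤ} : x ∈ shiftSet B k ↔ x - k ∈ B := by
  constructor
  · rintro ⟨y, hy, rfl⟩; simpa using hy
  · intro h; exact ⟨x - k, h, by ring⟩

lemma shiftSet_inj {B C : Set ℤ} {k : ℤ} (h : shiftSet B k = shiftSet C k) : B = C := by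
  ext x
  have := Set.ext_iff.mp h (x + k)
  simpa [mem_shiftSet] using this

/-- β-set growth/finiteness conditions making `charge` meaningful. -/
def Good (C : Set ℤ) : Prop :=
  (C ∩ {x : ℤ | 0 ≤ x}).Finite ∧ ({x : ℤ | x < 0} \ C).Finite

def CutoffOK (C : Set ℤ) (M : ℤ) : Prop :=
  M ≤ 0 ∧ (∀ x, x < M → x ∈ C) ∧ (C ∩ {x | M ≤ x}).Finite

lemma finite_band (a b : ℤ) : {x : ℤ | a ≤ x ∧ x < b}.Finite := by
  have : {x : ℤ | a ≤ x ∧ x < b} = Set.Ico a b := by ext x; simp [Set.mem_Ico]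
  rw [this]; exact Set.finite_Ico a b

lemma cutoffOK_mono {C : Set ℤ} {M M' : ℤ} (h : CutoffOK C M) (hle : M' ≤ M) :
    CutoffOK C M' := by
  obtain ⟨h0, h1, h2⟩ := h
  refine ⟨le_trans hle h0, fun x hx => h1 x (lt_of_lt_of_le hx hle), ?_⟩
  refine ((h2.union (finite_band M' M)).subset ?_)
  rintro x ⟨hxC, hx⟩
  rcases lt_or_ge x M with hc | hc
  · exact Or.inr ⟨hx, hc⟩
  · exact Or.inl ⟨hxC, hc⟩

lemma good_cutoff {C : Set ℤ} (h : Good C) : ∃ M, CutoffOK C M := by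
  obtain ⟨h1, h2⟩ := h
  obtain ⟨b, hb⟩ := h2.bddBelow
  refine ⟨min b 0, min_le_right _ _, fun x hx => ?_, ?_⟩
  · by_contra hxC
    have hx0 : x < 0 := lt_of_lt_of_le hx (min_le_right _ _)
    have := hb ⟨hx0, hxC⟩
    exact absurd (lt_of_lt_of_le hx (min_le_left _ _)) (not_lt.mpr this)
  · refine ((h1.union (finite_band (min b 0) 0)).subset ?_)
    rintro x ⟨hxC, hx⟩
    rcases le_or_gt 0 x with hc | hc
    · exact Or.inl ⟨hxC, hc⟩
    · exact Or.inr ⟨hx, hc⟩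

lemma charge_cutoff {C : Set ℤ} {M : ℤ} (h : CutoffOK C M) :
    charge C = ((C ∩ {x | M ≤ x}).ncard : ℤ) + M := by
  obtain ⟨h0, h1, h2⟩ := h
  set I : Set ℤ := {x | M ≤ x ∧ x < 0} with hI
  have hIfin : I.Finite := finite_band M 0
  have hAeq : C ∩ {x | M ≤ x} = (C ∩ I) ∪ (C ∩ {x : ℤ | 0 ≤ x}) := by
    ext x
    simp only [Set.mem_inter_iff, Set.mem_union, Set.mem_setOf_eq, hI]
    constructor
    · rintro ⟨hc, hm⟩
      rcases lt_or_ge x 0 with hx | hx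
      · exact Or.inl ⟨hc, hm, hx⟩
      · exact Or.inr ⟨hc, hx⟩
    · rintro (⟨hc, hm, _⟩ | ⟨hc, hx⟩)
      · exact ⟨hc, hm⟩
      · exact ⟨hc, le_trans h0 hx⟩
  have hDeq : {x : ℤ | x < 0} \ C = I \ C := by
    ext x
    simp only [Set.mem_diff, Set.mem_setOf_eq, hI]
    constructor
    · rintro ⟨hx, hc⟩
      refine ⟨⟨?_, hx⟩, hc⟩
      by_contra hm
      exact hc (h1 x (not_le.mp hm))
    · rintro ⟨⟨_, hx⟩, hc⟩
      exact ⟨hx, hc⟩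
  have hIeq : I = (C ∩ I) ∪ (I \ C) := by
    ext x
    by_cases hc : x ∈ C <;> simp [Set.mem_inter_iff, Set.mem_diff, hc] <;> tauto
  have hfin1 : (C ∩ I).Finite := hIfin.subset (Set.inter_subset_right)
  have hfin2 : (C ∩ {x : ℤ | 0 ≤ x}).Finite :=
    h2.subset (by rintro x ⟨hc, hx⟩; exact ⟨hc, le_trans h0 hx⟩)
  have hfin3 : (I \ C).Finite := hIfin.subset Set.diff_subset
  have hcard1 : (C ∩ {x | M ≤ x}).ncard = (C ∩ I).ncard + (C ∩ {x : ℤ | 0 ≤ x}).ncard := by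
    rw [hAeq]
    refine Set.ncard_union_eq ?_ hfin1 hfin2
    refine Set.disjoint_left.mpr ?_
    rintro x ⟨_, _, hx⟩ ⟨_, hx'⟩
    exact absurd hx' (not_le.mpr hx)
  have hcard2 : I.ncard = (C ∩ I).ncard + (I \ C).ncard := by
    conv_lhs => rw [hIeq]
    refine Set.ncard_union_eq ?_ hfin1 hfin3
    exact Set.disjoint_left.mpr (fun x ⟨hc, _⟩ ⟨_, hc'⟩ => hc' hc)
  have hcardI : (I.ncard : ℤ) = -M := by
    have : I = ↑(Finset.Ico M 0) := by ext x; simp [hI, Set.mem_Ico]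
    rw [this, Set.ncard_coe_finset, Int.card_Ico]
    omega
  unfold charge
  rw [hDeq] at *
  have : ((I \ C).ncard : ℤ) = -M - ((C ∩ I).ncard : ℤ) := by omega
  rw [this, hcard1]
  push_cast
  ring

lemma charge_shift {C : Set ℤ} (h : Good C) (k : ℤ) :
    charge (shiftSet C k) = charge C + k := by
  obtain ⟨M0, hM0⟩ := good_cutoff h
  set M := min M0 (-k) with hM
  have hMok : CutoffOK C M := cutoffOK_mono hM0 (min_le_left _ _)
  obtain ⟨h0, h1, h2⟩ := id hMok
  have himg : shiftSet C k ∩ {x | M + k ≤ x} = (fun x => x + k) '' (C ∩ {x | M ≤ x}) := by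
    ext x
    simp only [Set.mem_inter_iff, Set.mem_setOf_eq, Set.mem_image, mem_shiftSet]
    constructor
    · rintro ⟨hc, hm⟩
      exact ⟨x - k, ⟨hc, by omega⟩, by ring⟩
    · rintro ⟨y, ⟨hc, hm⟩, rfl⟩
      exact ⟨by simpa using hc, by omega⟩
  have hok' : CutoffOK (shiftSet C k) (M + k) := by
    refine ⟨by omega, fun x hx => ?_, ?_⟩
    · exact mem_shiftSet.mpr (h1 _ (by omega))
    · rw [himg]; exact h2.image _
  rw [charge_cutoff hok', charge_cutoff hMok, himg,
    Set.ncard_image_of_injective _ (add_left_injective k)]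
  ring

end Stmt16Aux
namespace Stmt16Aux

lemma good_betaOf {p : ℕ → ℕ} (hp : IsPartitionFun p) (t : ℤ) : Good (betaOf p t) := by
  obtain ⟨hmono, N, hN⟩ := hp
  constructor
  · refine (finite_band 0 (p 0 + t)).subset ?_
    rintro x ⟨⟨a, rfl⟩, hx⟩
    refine ⟨hx, ?_⟩
    have := hmono 0 a (Nat.zero_le a)
    simp only [Set.mem_setOf_eq] at hx ⊢
    omega
  · refine (finite_band (t - N) 0).subset ?_
    rintro x ⟨hx, hxB⟩
    refine ⟨?_, hx⟩
    by_contra hc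
    push_neg at hc
    apply hxB
    refine ⟨(t - 1 - x).toNat, ?_⟩
    have ha : ((t - 1 - x).toNat : ℤ) = t - 1 - x := by omega
    have hge : N ≤ (t - 1 - x).toNat := by omega
    rw [hN _ hge]
    push_cast [ha]
    ring

lemma good_quotComp {e : ℕ} {i : ℕ} (he : 0 < e) (hi : i < e) {B : Set ℤ} (h : Good B) :
    Good (quotComp e B i) := by
  obtain ⟨h1, h2⟩ := h
  have hinj : Function.Injective (fun a : ℤ => a * (e : ℤ) + (i : ℤ)) := by
    intro a b hab
    simp only at hab
    have : (e : ℤ) ≠ 0 := by exact_mod_cast he.ne'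
    have := mul_right_cancel₀ this (by linarith : a * (e:ℤ) = b * (e:ℤ))
    exact this
  constructor
  · refine (h1.preimage (hinj.injOn)).subset ?_
    rintro a ⟨ha, ha0⟩
    simp only [Set.mem_setOf_eq] at ha0
    refine ⟨ha, ?_⟩
    simp only [Set.mem_setOf_eq]
    positivity
  · refine (h2.preimage (hinj.injOn)).subset ?_
    rintro a ⟨ha0, ha⟩
    simp only [Set.mem_setOf_eq] at ha0
    refine ⟨?_, ha⟩
    simp only [Set.mem_setOf_eq]
    nlinarith [(by exact_mod_cast hi : (i:ℤ) < (e:ℤ))]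

lemma betaOf_add (p : ℕ → ℕ) (t k : ℤ) : betaOf p (t + k) = shiftSet (betaOf p t) k := by
  ext x
  simp only [betaOf, Set.mem_setOf_eq, mem_shiftSet]
  constructor
  · rintro ⟨a, rfl⟩; exact ⟨a, by ring⟩
  · rintro ⟨a, ha⟩; exact ⟨a, by omega⟩

lemma quotComp_shift (e : ℕ) (B : Set ℤ) (i : ℕ) (v : ℤ) :
    quotComp e (shiftSet B ((e : ℤ) * v)) i = shiftSet (quotComp e B i) v := by
  ext a
  simp only [quotComp, Set.mem_setOf_eq, mem_shiftSet]
  have : ∀ x : ℤ, (a - v) * (e:ℤ) + i = a * e + i - e * v := fun _ => by ring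
  constructor
  · intro h
    have heq : (a - v) * (e:ℤ) + (i:ℤ) = a * (e:ℤ) + (i:ℤ) - (e:ℤ) * v := by ring
    rw [heq]; exact h
  · intro h
    have heq : a * (e:ℤ) + (i:ℤ) - (e:ℤ) * v = (a - v) * (e:ℤ) + (i:ℤ) := by ring
    rw [heq]; exact h

lemma decomp_unique {e a a' r r' : ℤ} (h1 : 0 ≤ r) (h2 : r < e) (h3 : 0 ≤ r')
    (h4 : r' < e) (h : a * e + r = a' * e + r') : a = a' ∧ r = r' := by
  have key : (a - a') * e = r' - r := by ring_nf; linarith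
  have habs : |r' - r| < e := abs_lt.mpr ⟨by omega, by omega⟩
  have : |a - a'| * |e| < e := by rw [← abs_mul, key]; exact habs
  have he : 0 < e := by omega
  rw [abs_of_pos he] at this
  have h5 : |a - a'| < 1 := by
    by_contra hc
    push_neg at hc
    nlinarith
  have h6 : a = a' := by
    have := abs_lt.mp h5
    omega
  refine ⟨h6, ?_⟩
  rw [h6] at h
  omega

end Stmt16Aux
namespace Stmt16Aux

lemma quot_uglov (e ℓ : ℕ) (he : 0 < e) (B : Fin ℓ → Set ℤ) {i : ℕ} (hi : i < e) :
    quotComp e (uglovU e ℓ B) i =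
      ⋃ j : Fin ℓ, (fun a : ℤ => a * (ℓ : ℤ) + ((ℓ : ℤ) - 1 - (j.1 : ℤ))) ''
        quotComp e (B j) i := by
  have heZ : (0 : ℤ) < (e : ℤ) := by exact_mod_cast he
  have hiZ : (i : ℤ) < (e : ℤ) := by exact_mod_cast hi
  ext x
  simp only [quotComp, uglovU, Set.mem_setOf_eq, Set.mem_iUnion, Set.mem_image]
  constructor
  · rintro ⟨j, y, hy, hxy⟩
    set q := y / (e : ℤ) with hq
    set r := y % (e : ℤ) with hr
    have hqr : (e : ℤ) * q + r = y := Int.mul_ediv_add_emod y e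
    have hr0 : 0 ≤ r := Int.emod_nonneg y heZ.ne'
    have hre : r < (e : ℤ) := Int.emod_lt_of_pos y heZ
    have hups : upsilon e ℓ (j.1 + 1) y = (q * (ℓ : ℤ) + ((ℓ : ℤ) - 1 - (j.1 : ℤ))) * e + r := by
      unfold upsilon
      rw [← hr]
      push_cast
      have hyr : y - r = (e : ℤ) * q := by omega
      rw [hyr]
      ring
    rw [hups] at hxy
    obtain ⟨hx, hri⟩ := decomp_unique hr0 hre (by positivity) hiZ hxy
    refine ⟨j, q, ?_, hx⟩
    show q * (e : ℤ) + (i : ℤ) ∈ B j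
    have hcomm : q * (e : ℤ) = (e : ℤ) * q := mul_comm _ _
    have : q * (e : ℤ) + (i : ℤ) = y := by omega
    rw [this]; exact hy
  · rintro ⟨j, a, ha, rfl⟩
    refine ⟨j, a * (e : ℤ) + (i : ℤ), ha, ?_⟩
    have hmod : (a * (e : ℤ) + (i : ℤ)) % (e : ℤ) = (i : ℤ) := by
      have h1 : (a * (e : ℤ) + (i : ℤ)) = (i : ℤ) + (e : ℤ) * a := by ring
      rw [h1, Int.add_mul_emod_self_left, Int.emod_eq_of_lt (by positivity) hiZ]
    unfold upsilon
    rw [hmod]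
    push_cast
    ring

lemma ncard_iUnion_fin {n : ℕ} (S : Fin n → Set ℤ) (hfin : ∀ j, (S j).Finite)
    (hdis : ∀ j k, j ≠ k → Disjoint (S j) (S k)) :
    (⋃ j, S j).ncard = ∑ j, (S j).ncard := by
  induction n with
  | zero => simp
  | succ n ih =>
    have hsplit : (⋃ j : Fin (n + 1), S j) = S 0 ∪ ⋃ j : Fin n, S j.succ := by
      ext x
      simp only [Set.mem_iUnion, Set.mem_union]
      constructor
      · rintro ⟨j, hj⟩
        rcases Fin.eq_zero_or_eq_succ j with rfl | ⟨k, rfl⟩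
        · exact Or.inl hj
        · exact Or.inr ⟨k, hj⟩
      · rintro (h | ⟨k, hk⟩)
        · exact ⟨0, h⟩
        · exact ⟨k.succ, hk⟩
    have hd01 : Disjoint (S 0) (⋃ j : Fin n, S j.succ) :=
      Set.disjoint_iUnion_right.mpr (fun j => hdis 0 j.succ (Fin.succ_ne_zero j).symm)
    have hcard := ih (fun j : Fin n => S j.succ) (fun j => hfin j.succ)
      (fun j k hjk => hdis j.succ k.succ (by simpa using hjk))
    rw [hsplit, Set.ncard_union_eq hd01 (hfin 0)
      (Set.finite_iUnion (fun j : Fin n => hfin j.succ)), hcard, Fin.sum_univ_succ]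

lemma charge_union_g {ℓ : ℕ} (hl : 0 < ℓ) (C : Fin ℓ → Set ℤ) (hg : ∀ j, Good (C j)) :
    charge (⋃ j : Fin ℓ, (fun a : ℤ => a * (ℓ : ℤ) + ((ℓ : ℤ) - 1 - (j.1 : ℤ))) '' C j)
      = ∑ j, charge (C j) := by
  haveI : Nonempty (Fin ℓ) := ⟨⟨0, hl⟩⟩
  have hlZ : (0 : ℤ) < (ℓ : ℤ) := by exact_mod_cast hl
  choose M0 hM0 using fun j => good_cutoff (hg j)
  set M : ℤ := min (Finset.univ.inf' Finset.univ_nonempty M0) 0 with hMdef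
  have hMj : ∀ j, CutoffOK (C j) M :=
    fun j => cutoffOK_mono (hM0 j)
      (le_trans (min_le_left _ _) (Finset.inf'_le _ (Finset.mem_univ j)))
  have hM0' : M ≤ 0 := min_le_right _ _
  set g : Fin ℓ → ℤ → ℤ := fun j a => a * (ℓ : ℤ) + ((ℓ : ℤ) - 1 - (j.1 : ℤ)) with hgdef
  have hcj : ∀ j : Fin ℓ, 0 ≤ (ℓ : ℤ) - 1 - (j.1 : ℤ) ∧ (ℓ : ℤ) - 1 - (j.1 : ℤ) < ℓ := by
    intro j
    have := j.2
    omega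
  -- the key set identity
  have hkey : (⋃ j, g j '' C j) ∩ {x | M * ℓ ≤ x}
      = ⋃ j, g j '' (C j ∩ {x | M ≤ x}) := by
    ext x
    simp only [Set.mem_inter_iff, Set.mem_iUnion, Set.mem_image, Set.mem_setOf_eq]
    constructor
    · rintro ⟨⟨j, a, ha, rfl⟩, hx⟩
      refine ⟨j, a, ⟨ha, ?_⟩, rfl⟩
      by_contra hc
      push_neg at hc
      have h1 : a + 1 ≤ M := by omega
      have h2 : (a + 1) * (ℓ : ℤ) ≤ M * ℓ := mul_le_mul_of_nonneg_right h1 hlZ.le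
      have := (hcj j).2
      have := (hcj j).1
      simp only [hgdef] at hx
      nlinarith
    · rintro ⟨j, a, ⟨ha, haM⟩, rfl⟩
      refine ⟨⟨j, a, ha, rfl⟩, ?_⟩
      have h2 : M * (ℓ : ℤ) ≤ a * ℓ := mul_le_mul_of_nonneg_right haM hlZ.le
      have := (hcj j).1
      simp only [hgdef]
      omega
  have hginj : ∀ j : Fin ℓ, Function.Injective (g j) := by
    intro j a b hab
    simp only [hgdef] at hab
    have := mul_right_cancel₀ hlZ.ne' (by linarith : a * (ℓ : ℤ) = b * (ℓ : ℤ))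
    exact this
  have hdisj : ∀ j k : Fin ℓ, j ≠ k →
      Disjoint (g j '' (C j ∩ {x | M ≤ x})) (g k '' (C k ∩ {x | M ≤ x})) := by
    intro j k hjk
    rw [Set.disjoint_left]
    rintro x ⟨a, _, rfl⟩ ⟨b, _, hb⟩
    simp only [hgdef] at hb
    obtain ⟨_, hr⟩ := decomp_unique (hcj k).1 (hcj k).2 (hcj j).1 (hcj j).2 hb
    apply hjk
    have : (j.1 : ℤ) = (k.1 : ℤ) := by omega
    exact Fin.ext (by exact_mod_cast this)
  have hfinj : ∀ j : Fin ℓ, (g j '' (C j ∩ {x | M ≤ x})).Finite :=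
    fun j => ((hMj j).2.2).image _
  have hUok : CutoffOK (⋃ j, g j '' C j) (M * ℓ) := by
    refine ⟨mul_nonpos_iff.mpr (Or.inr ⟨hM0', hlZ.le⟩), ?_, ?_⟩
    · intro x hx
      set q := x / (ℓ : ℤ) with hq
      set r := x % (ℓ : ℤ) with hr
      have hqr : (ℓ : ℤ) * q + r = x := Int.mul_ediv_add_emod x ℓ
      have hr0 : 0 ≤ r := Int.emod_nonneg x hlZ.ne'
      have hrl : r < (ℓ : ℤ) := Int.emod_lt_of_pos x hlZ
      have hqM : q < M := by
        by_contra hc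
        push_neg at hc
        have : M * (ℓ : ℤ) ≤ q * ℓ := mul_le_mul_of_nonneg_right hc hlZ.le
        nlinarith
      set j : Fin ℓ := ⟨ℓ - 1 - r.toNat, by omega⟩ with hj
      simp only [Set.mem_iUnion, Set.mem_image]
      refine ⟨j, q, (hMj j).2.1 q hqM, ?_⟩
      have hj1 : (j.1 : ℤ) = (ℓ : ℤ) - 1 - r := by
        rw [hj]
        show ((ℓ - 1 - r.toNat : ℕ) : ℤ) = (ℓ : ℤ) - 1 - r
        omega
      have hcomm : q * (ℓ : ℤ) = (ℓ : ℤ) * q := mul_comm _ _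
      simp only [hgdef, hj1]
      omega
    · rw [hkey]
      exact Set.finite_iUnion hfinj
  rw [charge_cutoff hUok, hkey,
    ncard_iUnion_fin _ hfinj hdisj]
  have hcardj : ∀ j : Fin ℓ, (g j '' (C j ∩ {x | M ≤ x})).ncard
      = (C j ∩ {x | M ≤ x}).ncard :=
    fun j => Set.ncard_image_of_injective _ (hginj j)
  have hchargej : ∀ j : Fin ℓ, ((C j ∩ {x | M ≤ x}).ncard : ℤ) = charge (C j) - M :=
    fun j => by have := charge_cutoff (hMj j); omega
  push_cast
  calc (∑ j : Fin ℓ, ((g j '' (C j ∩ {x | M ≤ x})).ncard : ℤ)) + M * ℓ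
      = (∑ j : Fin ℓ, (charge (C j) - M)) + M * ℓ := by
        congr 1
        refine Finset.sum_congr rfl (fun j _ => ?_)
        rw [hcardj j, hchargej j]
    _ = ∑ j, charge (C j) := by
        rw [Finset.sum_sub_distrib, Finset.sum_const, Finset.card_univ,
          Fintype.card_fin, nsmul_eq_mul]
        ring

end Stmt16Aux
namespace Stmt16Aux

lemma beta_step {p q : ℕ → ℕ} (hp : IsPartitionFun p) {c : ℤ}
    (hsub : betaOf p c ⊆ betaOf q c) (hqmono : ∀ a b : ℕ, a ≤ b → q b ≤ q a)
    (a : ℕ) (hmin : ∀ b, b < a → p b = q b) : p a ≤ q a := by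
  by_contra hgt
  push_neg at hgt
  have hx : (p a : ℤ) + c - ((a : ℤ) + 1) ∈ betaOf q c := hsub ⟨a, rfl⟩
  obtain ⟨b, hb⟩ := hx
  rcases lt_trichotomy b a with hba | rfl | hab
  · have h1 : p a ≤ p b := hp.1 b a hba.le
    have h2 : p b = q b := hmin b hba
    omega
  · omega
  · have h1 : q b ≤ q a := hqmono a b hab.le
    omega

lemma beta_inj {p q : ℕ → ℕ} (hp : IsPartitionFun p) (hq : IsPartitionFun q) {c : ℤ}
    (h : betaOf p c = betaOf q c) : p = q := by
  funext a
  induction a using Nat.strong_induction_on with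
  | _ a ih =>
    have h1 : p a ≤ q a := beta_step hp (le_of_eq h) hq.1 a (fun b hb => ih b hb)
    have h2 : q a ≤ p a := beta_step hq (le_of_eq h.symm) hp.1 a (fun b hb => (ih b hb).symm)
    omega

lemma betaInv_shift {B : Set ℤ} (hB : Good B) (k : ℤ) :
    betaInv (shiftSet B k) = betaInv B := by
  unfold betaInv
  have hch : charge (shiftSet B k) = charge B + k := charge_shift hB k
  by_cases h : ∃ p : ℕ → ℕ, IsPartitionFun p ∧ betaOf p (charge B) = B
  · have h' : ∃ p : ℕ → ℕ, IsPartitionFun p ∧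
        betaOf p (charge (shiftSet B k)) = shiftSet B k := by
      obtain ⟨p, hp1, hp2⟩ := h
      exact ⟨p, hp1, by rw [hch, betaOf_add, hp2]⟩
    rw [dif_pos h, dif_pos h']
    have e1 := h'.choose_spec
    have e2 := h.choose_spec
    have hBB : betaOf h'.choose (charge B) = B := by
      apply shiftSet_inj (k := k)
      rw [← betaOf_add, ← hch]
      exact e1.2
    exact beta_inj e1.1 e2.1 (hBB.trans e2.2.symm)
  · have h' : ¬ ∃ p : ℕ → ℕ, IsPartitionFun p ∧
        betaOf p (charge (shiftSet B k)) = shiftSet B k := by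
      rintro ⟨p, hp1, hp2⟩
      apply h
      refine ⟨p, hp1, shiftSet_inj (k := k) ?_⟩
      rw [← betaOf_add, ← hch]
      exact hp2
    rw [dif_neg h, dif_neg h']

lemma coreSet_eq_shift {e : ℕ} {B B' : Set ℤ} {V : ℤ}
    (h : ∀ i, i < e → charge (quotComp e B' i) = charge (quotComp e B i) + V) :
    coreSet e B' = shiftSet (coreSet e B) (V * e) := by
  ext x
  simp only [coreSet, mem_shiftSet, Set.mem_setOf_eq]
  constructor
  · rintro ⟨i, hi, a, ha, rfl⟩
    refine ⟨i, hi, a - V, by rw [h i hi] at ha; omega, by ring⟩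
  · rintro ⟨i, hi, a, ha, hx⟩
    refine ⟨i, hi, a + V, by rw [h i hi]; omega, ?_⟩
    have h1 : (a + V) * (e : ℤ) = a * e + V * e := by ring
    omega

lemma good_coreSet {e : ℕ} (he : 0 < e) (B : Set ℤ) : Good (coreSet e B) := by
  have hne : (Finset.range e).Nonempty := ⟨0, Finset.mem_range.mpr he⟩
  set lo : ℤ := (Finset.range e).inf' hne (fun i => charge (quotComp e B i)) with hlo
  set hi : ℤ := (Finset.range e).sup' hne (fun i => charge (quotComp e B i)) with hhi
  have hlos : ∀ i, i < e → lo ≤ charge (quotComp e B i) :=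
    fun i h => Finset.inf'_le (fun i => charge (quotComp e B i)) (Finset.mem_range.mpr h)
  have hhis : ∀ i, i < e → charge (quotComp e B i) ≤ hi :=
    fun i h => Finset.le_sup' (fun i => charge (quotComp e B i)) (Finset.mem_range.mpr h)
  have heZ : (0 : ℤ) < (e : ℤ) := by exact_mod_cast he
  constructor
  · refine (finite_band 0 (hi * e)).subset ?_
    rintro x ⟨⟨i, hie, a, ha, rfl⟩, hx0⟩
    simp only [Set.mem_setOf_eq] at hx0 ⊢
    refine ⟨hx0, ?_⟩
    have h1 : a ≤ hi - 1 := by have := hhis i hie; omega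
    have h2 : a * (e : ℤ) ≤ (hi - 1) * e := mul_le_mul_of_nonneg_right h1 heZ.le
    have h3 : (hi - 1) * (e : ℤ) = hi * e - e := by ring
    have h4 : (i : ℤ) < e := by exact_mod_cast hie
    omega
  · refine (finite_band (lo * e) 0).subset ?_
    rintro x ⟨hx0, hxc⟩
    simp only [Set.mem_setOf_eq] at hx0 ⊢
    refine ⟨?_, hx0⟩
    by_contra hc
    push_neg at hc
    apply hxc
    set q := x / (e : ℤ) with hq
    set r := x % (e : ℤ) with hr
    have hqr : (e : ℤ) * q + r = x := Int.mul_ediv_add_emod x e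
    have hr0 : 0 ≤ r := Int.emod_nonneg x heZ.ne'
    have hre : r < (e : ℤ) := Int.emod_lt_of_pos x heZ
    have hqlo : q < lo := by
      by_contra hc2
      push_neg at hc2
      have : lo * (e : ℤ) ≤ q * e := mul_le_mul_of_nonneg_right hc2 heZ.le
      have hcm : q * (e : ℤ) = (e : ℤ) * q := mul_comm _ _
      omega
    refine ⟨r.toNat, by omega, q, ?_, ?_⟩
    · have := hlos r.toNat (by omega)
      have hrr : ((r.toNat : ℕ) : ℤ) = r := by omega
      omega
    · have hcm : q * (e : ℤ) = (e : ℤ) * q := mul_comm _ _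
      omega

end Stmt16Aux
open Stmt16Aux in
/-- if (μ; u) lies in the Ŵ_ℓ-orbit of (λ; t), then
core_e(μ; u) = core_e(λ; t). -/
theorem stmt16 (e ℓ : ℕ) (he : 2 ≤ e) (hl : 1 ≤ ℓ) (Λ : Fin ℓ → ℕ → ℕ)
    (hΛ : ∀ j, IsPartitionFun (Λ j)) (t : Fin ℓ → ℤ)
    (μ : Fin ℓ → ℕ → ℕ) (u : Fin ℓ → ℤ)
    (h : ∃ σ : Equiv.Perm (Fin ℓ), ∃ v : Fin ℓ → ℤ,
      μ = (fun j => Λ (σ j)) ∧ u = (fun j => t (σ j) + (e : ℤ) * v j)) :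
    corePart e ℓ μ u = corePart e ℓ Λ t := by
  obtain ⟨σ, v, rfl, rfl⟩ := h
  have he1 : 0 < e := by omega
  have hl1 : 0 < ℓ := hl
  have hgoodq : ∀ (p : ℕ → ℕ), IsPartitionFun p → ∀ (c : ℤ) (i : ℕ), i < e →
      Good (quotComp e (betaOf p c) i) :=
    fun p hp c i hi => good_quotComp he1 hi (good_betaOf hp c)
  have hq : ∀ i, i < e →
      charge (quotComp e
        (uglovMulti e ℓ (fun j => Λ (σ j)) (fun j => t (σ j) + (e : ℤ) * v j)) i)
      = charge (quotComp e (uglovMulti e ℓ Λ t) i) + ∑ j, v j := by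
    intro i hi
    unfold uglovMulti
    rw [quot_uglov e ℓ he1 _ hi, quot_uglov e ℓ he1 _ hi,
      charge_union_g hl1 _ (fun j => hgoodq _ (hΛ _) _ i hi),
      charge_union_g hl1 _ (fun j => hgoodq _ (hΛ _) _ i hi)]
    have hper : ∀ j : Fin ℓ,
        charge (quotComp e (betaOf (Λ (σ j)) (t (σ j) + (e : ℤ) * v j)) i)
        = charge (quotComp e (betaOf (Λ (σ j)) (t (σ j))) i) + v j := by
      intro j
      rw [betaOf_add, quotComp_shift, charge_shift (hgoodq _ (hΛ _) _ i hi)]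
    rw [Finset.sum_congr rfl (fun j _ => hper j), Finset.sum_add_distrib]
    congr 1
    exact Equiv.sum_comp σ (fun j => charge (quotComp e (betaOf (Λ j) (t j)) i))
  have hcore := coreSet_eq_shift (e := e) hq
  unfold corePart
  rw [hcore, betaInv_shift (good_coreSet he1 _) _]
end

section
/- Let λ be an ℓ-partition and t ∈ ℤ^ℓ a multicharge, and suppose (μ; u) lies in the Ŵ_ℓ-orbit of (λ; t). Then wt_e(μ; u) = min{wt_e(ν; w) : (ν; w) in the Ŵ_ℓ-orbit of (λ; t)} (this minimum exists, the weights being nonnegative integers) if and only if u ∈ Ā_e^ℓ. -/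
namespace Stmt17

/-- Tame: contains all sufficiently small integers, and bounded above. -/
def Tame (B : Set ℤ) : Prop :=
  (∃ a : ℤ, ∀ x : ℤ, x ≤ a → x ∈ B) ∧ (∃ b : ℤ, ∀ x ∈ B, x ≤ b)

lemma mem_shiftSet {B : Set ℤ} {c x : ℤ} : x ∈ shiftSet B c ↔ x - c ∈ B := by
  constructor
  · rintro ⟨y, hy, rfl⟩; simpa using hy
  · intro h; exact ⟨x - c, h, by ring⟩

lemma shiftSet_zero (B : Set ℤ) : shiftSet B 0 = B := by
  ext x; simp [mem_shiftSet]

lemma tame_shiftSet {B : Set ℤ} (h : Tame B) (c : ℤ) : Tame (shiftSet B c) := by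
  obtain ⟨⟨a, ha⟩, ⟨b, hb⟩⟩ := h
  refine ⟨⟨a + c, fun x hx => mem_shiftSet.2 (ha _ (by omega))⟩,
    ⟨b + c, fun x hx => by have := hb _ (mem_shiftSet.1 hx); omega⟩⟩

lemma shiftSet_diff (X Y : Set ℤ) (c : ℤ) :
    shiftSet X c \ shiftSet Y c = shiftSet (X \ Y) c := by
  ext x; simp [mem_shiftSet]

lemma ncard_shiftSet (X : Set ℤ) (c : ℤ) : (shiftSet X c).ncard = X.ncard :=
  Set.ncard_image_of_injective _ (fun x y h => by simpa using h)

lemma ncard_biUnion {α ι : Type*} [DecidableEq ι] (s : Finset ι) (f : ι → Set α)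
    (hfin : ∀ i ∈ s, (f i).Finite)
    (hdisj : ∀ i ∈ s, ∀ j ∈ s, i ≠ j → Disjoint (f i) (f j)) :
    (⋃ i ∈ s, f i).ncard = ∑ i ∈ s, (f i).ncard := by
  induction s using Finset.induction with
  | empty => simp
  | @insert i s hi ih =>
    rw [Finset.set_biUnion_insert, Finset.sum_insert hi]
    have hfin' : (⋃ j ∈ s, f j).Finite :=
      Set.Finite.biUnion s.finite_toSet (fun j hj => hfin j (by
        have hj' : j ∈ s := hj
        simp [hj']))
    have hd : Disjoint (f i) (⋃ j ∈ s, f j) := by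
      rw [Set.disjoint_iUnion₂_right]
      intro j hj
      have hj' : j ∈ s := hj
      exact hdisj i (by simp) j (by simp [hj']) (fun hh => hi (hh ▸ hj'))
    rw [Set.ncard_union_eq hd (hfin i (by simp)) hfin']
    rw [ih (fun j hj => hfin j (by simp [hj]))
      (fun a ha b hb hab => hdisj a (by simp [ha]) b (by simp [hb]) hab)]

/-- The master counting set. -/
def Qset (e : ℕ) (X Y : Set ℤ) (c : ℤ) : Set (ℤ × ℤ) :=
  {p | p.1 ∈ X ∧ p.2 ∉ Y ∧ (e : ℤ) ∣ p.1 - p.2 ∧ p.2 ≤ p.1 - c}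

lemma Qset_finite {e : ℕ} {X Y : Set ℤ} (hX : Tame X) (hY : Tame Y) (c : ℤ) :
    (Qset e X Y c).Finite := by
  obtain ⟨⟨aX, haX⟩, ⟨bX, hbX⟩⟩ := hX
  obtain ⟨⟨aY, haY⟩, ⟨bY, hbY⟩⟩ := hY
  apply Set.Finite.subset ((Set.finite_Icc (aY + c) bX).prod (Set.finite_Icc (aY + 1) (bX - c)))
  rintro ⟨x, y⟩ ⟨hx, hy, _, hle⟩
  have h1 : x ≤ bX := hbX _ hx
  have h2 : aY + 1 ≤ y := by
    by_contra hcon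
    exact hy (haY _ (by omega))
  exact ⟨⟨by omega, h1⟩, by omega, by omega⟩

lemma diff_finite {X Y : Set ℤ} (hX : Tame X) (hY : Tame Y) : (X \ Y).Finite := by
  obtain ⟨⟨aX, haX⟩, ⟨bX, hbX⟩⟩ := hX
  obtain ⟨⟨aY, haY⟩, ⟨bY, hbY⟩⟩ := hY
  apply Set.Finite.subset (Set.finite_Icc (aY + 1) bX)
  rintro x ⟨hx, hnx⟩
  refine ⟨?_, hbX _ hx⟩
  by_contra hcon
  exact hnx (haY _ (by omega))

end Stmt17

namespace Stmt17

lemma divmod_decomp {e : ℕ} (he : 0 < e) {Q r x : ℤ} (hr0 : 0 ≤ r) (hre : r < e)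
    (hx : x = e * Q + r) : x / e = Q ∧ x % e = r := by
  have he' : (e : ℤ) ≠ 0 := by exact_mod_cast he.ne'
  subst hx
  constructor
  · rw [add_comm, Int.add_mul_ediv_left r Q he', Int.ediv_eq_zero_of_lt hr0 hre, zero_add]
  · rw [add_comm, Int.add_mul_emod_self_left, Int.emod_eq_of_lt hr0 hre]

lemma mem_betaOf {p : ℕ → ℕ} {t x : ℤ} :
    x ∈ betaOf p t ↔ ∃ a : ℕ, x = (p a : ℤ) + t - ((a : ℤ) + 1) := Iff.rfl

lemma tame_betaOf {p : ℕ → ℕ} (hp : IsPartitionFun p) (t : ℤ) : Tame (betaOf p t) := by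
  obtain ⟨hmono, N, hN⟩ := hp
  constructor
  · refine ⟨t - N - 1, fun x hx => ?_⟩
    refine ⟨(t - 1 - x).toNat, ?_⟩
    have h2 : ((t - 1 - x).toNat : ℤ) = t - 1 - x := Int.toNat_of_nonneg (by omega)
    have h3 : p (t - 1 - x).toNat = 0 := hN _ (by omega)
    rw [h3]; push_cast; omega
  · refine ⟨(p 0 : ℤ) + t - 1, ?_⟩
    rintro x ⟨a, rfl⟩
    have := hmono 0 a (Nat.zero_le a)
    push_cast
    omega

lemma tame_quotComp {e : ℕ} (he : 0 < e) {B : Set ℤ} (hB : Tame B) (i : ℕ) :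
    Tame (quotComp e B i) := by
  obtain ⟨⟨a, ha⟩, ⟨b, hb⟩⟩ := hB
  have he' : (1 : ℤ) ≤ e := by exact_mod_cast he
  constructor
  · refine ⟨(a - i) / e - 1, fun c hc => ?_⟩
    show c * e + i ∈ B
    apply ha
    have hq : (e : ℤ) * ((a - i) / e) + (a - i) % e = a - i := Int.mul_ediv_add_emod _ _
    have hr : 0 ≤ (a - i) % e := Int.emod_nonneg _ (by positivity)
    have h1 : c * e ≤ ((a - i) / e - 1) * e :=
      mul_le_mul_of_nonneg_right hc (by positivity)
    have h2 : ((a - i) / e - 1) * e = e * ((a - i) / e) - e := by ring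
    linarith
  · refine ⟨max b 0, fun x hx => ?_⟩
    have hxB : x * e + (i : ℤ) ∈ B := hx
    have hxb := hb _ hxB
    by_contra hcon
    push_neg at hcon
    have hx0 : (0 : ℤ) < x := lt_of_le_of_lt (le_max_right b 0) hcon
    have h1 : x ≤ x * e := le_mul_of_one_le_right hx0.le he'
    have h2 : b ≤ max b 0 := le_max_left b 0
    have h3 : (0:ℤ) ≤ i := by positivity
    linarith

lemma pairSet_finite {C : Set ℤ} (hC : Tame C) :
    {q : ℤ × ℤ | q.1 ∈ C ∧ q.2 ∉ C ∧ q.2 < q.1}.Finite := by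
  obtain ⟨⟨a, ha⟩, ⟨b, hb⟩⟩ := hC
  apply Set.Finite.subset ((Set.finite_Icc a b).prod (Set.finite_Icc a b))
  rintro ⟨x, y⟩ ⟨hx, hy, hlt⟩
  have h1 : x ≤ b := hb _ hx
  have h2 : a + 1 ≤ y := by
    by_contra hcon
    exact hy (ha _ (by omega))
  exact ⟨⟨by omega, h1⟩, by omega, by omega⟩

lemma wtSet_eq_Qset {e : ℕ} (he : 0 < e) {B : Set ℤ} (hB : Tame B) :
    wtSet e B = (Qset e B B (e : ℤ)).ncard := by
  classical
  have he' : (e : ℤ) ≠ 0 := by exact_mod_cast he.ne'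
  have hepos : (0:ℤ) < e := by exact_mod_cast he
  have hinj : ∀ i : ℕ, Function.Injective
      (fun q : ℤ × ℤ => (q.1 * e + (i:ℤ), q.2 * e + (i:ℤ))) := by
    intro i q q' hq
    simp only [Prod.mk.injEq] at hq
    have h1 : q.1 = q'.1 := by
      have := hq.1
      have : q.1 * e = q'.1 * e := by omega
      exact mul_right_cancel₀ he' this
    have h2 : q.2 = q'.2 := by
      have := hq.2
      have : q.2 * e = q'.2 * e := by omega
      exact mul_right_cancel₀ he' this
    exact Prod.ext h1 h2
  have key : Qset e B B (e:ℤ) = ⋃ i ∈ Finset.range e,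
      (fun q : ℤ × ℤ => (q.1 * e + (i:ℤ), q.2 * e + (i:ℤ))) ''
        {q : ℤ × ℤ | q.1 ∈ quotComp e B i ∧ q.2 ∉ quotComp e B i ∧ q.2 < q.1} := by
    ext ⟨x, y⟩
    simp only [Set.mem_iUnion, Finset.mem_range, Set.mem_image, Set.mem_setOf_eq, Qset,
      Prod.mk.injEq]
    constructor
    · rintro ⟨hx, hy, ⟨d, hd⟩, hle⟩
      have hr0 : 0 ≤ x % e := Int.emod_nonneg _ he'
      have hre : x % e < e := Int.emod_lt_of_pos _ hepos
      have hxd : (e:ℤ) * (x / e) + x % e = x := Int.mul_ediv_add_emod _ _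
      have hyr : y % e = x % e := by
        have hneg : (e:ℤ) * (-d) = -((e:ℤ) * d) := by ring
        have : y = x + (e:ℤ) * (-d) := by rw [hneg]; omega
        rw [this, Int.add_mul_emod_self_left]
      have hyd : (e:ℤ) * (y / e) + y % e = y := Int.mul_ediv_add_emod _ _
      have hitn : ((x % e).toNat : ℤ) = x % e := Int.toNat_of_nonneg hr0
      have hcx : x / e * (e:ℤ) = (e:ℤ) * (x / e) := mul_comm _ _
      have hcy : y / e * (e:ℤ) = (e:ℤ) * (y / e) := mul_comm _ _
      refine ⟨(x % e).toNat, by omega, (x / e, y / e), ⟨?_, ?_, ?_⟩, ?_, ?_⟩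
      · show x / e * e + ((x % e).toNat : ℤ) ∈ B
        have : x / e * e + ((x % e).toNat : ℤ) = x := by rw [hitn, hcx]; omega
        rwa [this]
      · show ¬ (y / e * e + ((x % e).toNat : ℤ) ∈ B)
        have : y / e * e + ((x % e).toNat : ℤ) = y := by rw [hitn, hcy]; omega
        rwa [this]
      · -- y / e < x / e
        have h1 : (e:ℤ) * (y / e) ≤ (e:ℤ) * (x / e) - e := by omega
        have h2 : (e:ℤ) * (y / e) ≤ (e:ℤ) * (x / e - 1) := by linarith
        have := (mul_le_mul_iff_right₀ hepos).mp h2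
        omega
      · show x / e * (e:ℤ) + ((x % e).toNat : ℤ) = x
        rw [hitn, hcx]; omega
      · show y / e * (e:ℤ) + ((x % e).toNat : ℤ) = y
        rw [hitn, hcy]; omega
    · rintro ⟨i, hi, ⟨a, b⟩, ⟨ha, hb, hab⟩, hx, hy⟩
      subst hx; subst hy
      refine ⟨ha, hb, ⟨a - b, by ring⟩, ?_⟩
      show b * (e:ℤ) + (i:ℤ) ≤ a * (e:ℤ) + (i:ℤ) - (e:ℤ)
      have h1 : b * (e:ℤ) ≤ (a - 1) * e := mul_le_mul_of_nonneg_right (by omega) hepos.le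
      have h2 : (a - 1) * (e:ℤ) = a * e - e := by ring
      omega
  rw [key, ncard_biUnion]
  · unfold wtSet
    apply Finset.sum_congr rfl
    intro i _
    rw [Set.ncard_image_of_injective _ (hinj i)]
  · intro i hi
    exact ((pairSet_finite (tame_quotComp he hB i)).image _)
  · intro i hi j hj hij
    rw [Set.disjoint_left]
    rintro ⟨x, y⟩ ⟨⟨qa, qb⟩, _, hq⟩ ⟨⟨qa', qb'⟩, _, hq'⟩
    simp only [Prod.mk.injEq] at hq hq'
    have hie : (i:ℤ) < e := by exact_mod_cast Finset.mem_range.mp hi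
    have hje : (j:ℤ) < e := by exact_mod_cast Finset.mem_range.mp hj
    have h1 : x % e = i :=
      (divmod_decomp he (by positivity) hie (by rw [← hq.1]; ring)).2
    have h2 : x % e = j :=
      (divmod_decomp he (by positivity) hje (by rw [← hq'.1]; ring)).2
    exact hij (by exact_mod_cast h1 ▸ h2)

end Stmt17

namespace Stmt17

section Ups

variable {e ℓ : ℕ}

lemma upsilon_eq (he : 0 < e) (j : Fin ℓ) (x : ℤ) :
    upsilon e ℓ (j.1 + 1) x
      = (e:ℤ) * ((ℓ:ℤ) * (x / e) + ((ℓ:ℤ) - 1 - (j.1:ℤ))) + x % e := by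
  unfold upsilon
  have hx : x - x % e = (e:ℤ) * (x / e) := by
    have := Int.mul_ediv_add_emod x e
    omega
  rw [hx]
  push_cast
  ring

lemma ups_div_emod (he : 0 < e) (j : Fin ℓ) (x : ℤ) :
    upsilon e ℓ (j.1 + 1) x / e = (ℓ:ℤ) * (x / e) + ((ℓ:ℤ) - 1 - (j.1:ℤ)) ∧
      upsilon e ℓ (j.1 + 1) x % e = x % e := by
  have he' : ((e:ℤ)) ≠ 0 := by exact_mod_cast he.ne'
  exact divmod_decomp he (Int.emod_nonneg _ he') (Int.emod_lt_of_pos _ (by exact_mod_cast he))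
    (upsilon_eq he j x)

lemma ups_blk (he : 0 < e) (hl : 0 < ℓ) (j : Fin ℓ) (x : ℤ) :
    (upsilon e ℓ (j.1 + 1) x / e) / ℓ = x / e ∧
      (upsilon e ℓ (j.1 + 1) x / e) % ℓ = (ℓ:ℤ) - 1 - (j.1:ℤ) := by
  have hj := j.2
  exact divmod_decomp hl (by push_cast; omega)
    (by push_cast; omega)
    ((ups_div_emod he j x).1)

lemma ups_inj (he : 0 < e) (hl : 0 < ℓ) {j k : Fin ℓ} {x y : ℤ}
    (h : upsilon e ℓ (j.1 + 1) x = upsilon e ℓ (k.1 + 1) y) : j = k ∧ x = y := by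
  have h1 := ups_blk he hl j x
  have h2 := ups_blk he hl k y
  rw [h] at h1
  have hjk : (ℓ:ℤ) - 1 - (j.1:ℤ) = (ℓ:ℤ) - 1 - (k.1:ℤ) := by rw [← h1.2, h2.2]
  have hjk' : j.1 = k.1 := by omega
  have hj : j = k := Fin.ext hjk'
  subst hj
  have hx1 := (ups_div_emod he j x).2
  have hx2 := (ups_div_emod he j y).2
  rw [h] at hx1
  have hdiv : x / e = y / e := by rw [← h1.1, h2.1]
  have e1 := Int.mul_ediv_add_emod x e
  have e2 := Int.mul_ediv_add_emod y e
  constructor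
  · rfl
  · have : x % e = y % e := by rw [← hx1, hx2]
    have hh : (e:ℤ) * (x/e) = (e:ℤ) * (y/e) := by rw [hdiv]
    omega

lemma ups_surj (he : 0 < e) (hl : 0 < ℓ) (y : ℤ) :
    ∃ (j : Fin ℓ) (x : ℤ), upsilon e ℓ (j.1 + 1) x = y := by
  have he' : ((e:ℤ)) ≠ 0 := by exact_mod_cast he.ne'
  have hl' : ((ℓ:ℤ)) ≠ 0 := by exact_mod_cast hl.ne'
  have hρ0 : 0 ≤ y / e % ℓ := Int.emod_nonneg _ hl'
  have hρl : y / e % ℓ < ℓ := Int.emod_lt_of_pos _ (by exact_mod_cast hl)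
  set ρ : ℕ := (y / e % ℓ).toNat with hρ
  have hρc : (ρ : ℤ) = y / e % ℓ := Int.toNat_of_nonneg hρ0
  have hρℓ : ρ < ℓ := by omega
  refine ⟨⟨ℓ - 1 - ρ, by omega⟩, (e:ℤ) * (y / e / ℓ) + y % e, ?_⟩
  have hr0 : 0 ≤ y % e := Int.emod_nonneg _ he'
  have hre : y % e < e := Int.emod_lt_of_pos _ (by exact_mod_cast he)
  have hd := divmod_decomp he hr0 hre (rfl : (e:ℤ) * (y / e / ℓ) + y % e = _)
  rw [upsilon_eq he, hd.1, hd.2]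
  have hcast : ((ℓ - 1 - ρ : ℕ) : ℤ) = (ℓ:ℤ) - 1 - (ρ:ℤ) := by
    push_cast [Nat.cast_sub]
    omega
  have h1 : (ℓ:ℤ) - 1 - ((ℓ - 1 - ρ : ℕ) : ℤ) = (ρ:ℤ) := by omega
  rw [h1, hρc]
  have e1 := Int.mul_ediv_add_emod (y / e) ℓ
  have e2 := Int.mul_ediv_add_emod y e
  have : (ℓ:ℤ) * (y / e / ℓ) + y / e % ℓ = y / e := e1
  calc (e:ℤ) * ((ℓ:ℤ) * (y / e / ℓ) + y / e % ℓ) + y % e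
      = (e:ℤ) * (y / e) + y % e := by rw [this]
    _ = y := e2

lemma mem_uglov_iff (he : 0 < e) (hl : 0 < ℓ) {M : Fin ℓ → ℕ → ℕ} {s : Fin ℓ → ℤ}
    {j : Fin ℓ} {x : ℤ} :
    upsilon e ℓ (j.1 + 1) x ∈ uglovMulti e ℓ M s ↔ x ∈ betaOf (M j) (s j) := by
  unfold uglovMulti uglovU
  simp only [Set.mem_iUnion, Set.mem_image]
  constructor
  · rintro ⟨k, ξ, hξ, heq⟩
    obtain ⟨hk, hx⟩ := ups_inj he hl heq
    subst hk; subst hx; exact hξ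
  · intro hx
    exact ⟨j, x, hx, rfl⟩

lemma tame_uglovMulti (he : 0 < e) (hl : 0 < ℓ) {M : Fin ℓ → ℕ → ℕ}
    (hM : ∀ j, IsPartitionFun (M j)) (s : Fin ℓ → ℤ) :
    Tame (uglovMulti e ℓ M s) := by
  have he' : ((e:ℤ)) ≠ 0 := by exact_mod_cast he.ne'
  have heZ : (0:ℤ) < e := by exact_mod_cast he
  have hlZ : (0:ℤ) < ℓ := by exact_mod_cast hl
  haveI : Nonempty (Fin ℓ) := ⟨⟨0, hl⟩⟩
  choose lo hlo using fun j => (tame_betaOf (hM j) (s j)).1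
  choose hi hhi using fun j => (tame_betaOf (hM j) (s j)).2
  set A : ℤ := Finset.univ.inf' Finset.univ_nonempty lo with hA
  set Bx : ℤ := Finset.univ.sup' Finset.univ_nonempty hi with hB
  constructor
  · -- all y ≤ (e*ℓ)*(A/e - 2) are in U
    set z : ℤ := A / e - 2 with hz
    refine ⟨(e:ℤ) * ((ℓ:ℤ) * z), fun y hy => ?_⟩
    obtain ⟨j, x, hx⟩ := ups_surj (e := e) (ℓ := ℓ) he hl y
    rw [← hx, mem_uglov_iff he hl]
    apply hlo
    -- x = e * (y/e/ℓ) + y%e by uniqueness; but easier: bound x via ups formula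
    have h1 := (ups_div_emod he j x).1
    have h2 := (ups_div_emod he j x).2
    rw [hx] at h1 h2
    -- y/e ≤ ℓ*z
    have hye : y / e ≤ (ℓ:ℤ) * z := by
      have := Int.ediv_le_ediv heZ hy
      rwa [Int.mul_ediv_cancel_left _ he'] at this
    -- so ℓ*(x/e) + (ℓ-1-j) ≤ ℓ*z, hence x/e ≤ z - ... ⟹ x/e ≤ z - 0 ... need x/e ≤ z
    have hj2 := j.2
    have hxe : x / e ≤ z := by
      by_contra hcon
      push_neg at hcon
      have hmm : (ℓ:ℤ) * (z + 1) ≤ (ℓ:ℤ) * (x / e) := by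
        apply mul_le_mul_of_nonneg_left (by omega) hlZ.le
      have hzz : (ℓ:ℤ) * (z + 1) = (ℓ:ℤ) * z + ℓ := by ring
      have hjb : (0:ℤ) ≤ (ℓ:ℤ) - 1 - (j.1:ℤ) := by
        have := j.2
        push_cast
        omega
      omega
    -- x = e*(x/e) + x%e ≤ e*z + (e-1) ≤ A - e - 1 < A
    have e1 := Int.mul_ediv_add_emod x e
    have hxm : x % e < e := Int.emod_lt_of_pos _ heZ
    have hAe : (e:ℤ) * (A / e) ≤ A := by
      have := Int.mul_ediv_add_emod A e
      have := Int.emod_nonneg A he'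
      omega
    have hmul2 : (e:ℤ) * (x / e) ≤ (e:ℤ) * z := mul_le_mul_of_nonneg_left hxe heZ.le
    have hez : (e:ℤ) * z = (e:ℤ) * (A / e) - 2 * e := by rw [hz]; ring
    have hxm0 : 0 ≤ x % e := Int.emod_nonneg _ he'
    have hAlo : A ≤ lo j := Finset.inf'_le lo (Finset.mem_univ j)
    omega
  · refine ⟨(e:ℤ) * ((ℓ:ℤ) * (Bx / e) + (ℓ:ℤ)) + e, ?_⟩
    rintro y hy
    unfold uglovMulti uglovU at hy
    simp only [Set.mem_iUnion, Set.mem_image] at hy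
    obtain ⟨j, x, hx, rfl⟩ := hy
    have h1 := (ups_div_emod he j x).1
    have h2 := (ups_div_emod he j x).2
    have hxB : x ≤ Bx := le_trans (hhi j x hx) (Finset.le_sup' hi (Finset.mem_univ j))
    have hxe : x / e ≤ Bx / e := Int.ediv_le_ediv heZ hxB
    have hj2 := j.2
    have hml : (ℓ:ℤ) * (x / e) ≤ (ℓ:ℤ) * (Bx / e) := mul_le_mul_of_nonneg_left hxe hlZ.le
    have hup := upsilon_eq he j x
    have hxm : x % e < e := Int.emod_lt_of_pos _ heZ
    have hjb : (ℓ:ℤ) - 1 - (j.1:ℤ) ≤ (ℓ:ℤ) := by push_cast; omega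
    have : (ℓ:ℤ) * (x / e) + ((ℓ:ℤ) - 1 - (j.1:ℤ)) ≤ (ℓ:ℤ) * (Bx / e) + (ℓ:ℤ) := by omega
    have hmul : (e:ℤ) * ((ℓ:ℤ) * (x / e) + ((ℓ:ℤ) - 1 - (j.1:ℤ)))
        ≤ (e:ℤ) * ((ℓ:ℤ) * (Bx / e) + (ℓ:ℤ)) := mul_le_mul_of_nonneg_left this heZ.le
    rw [hup]
    omega

end Ups

end Stmt17

namespace Stmt17

def epsZ {ℓ : ℕ} (j k : Fin ℓ) : ℤ := if k ≤ j then 1 else 0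

section Master

variable {e ℓ : ℕ}

lemma eq_zero_of_dvd_small (heZ : (0:ℤ) < e) {a : ℤ} (h : ∃ c : ℤ, a = (e:ℤ) * c)
    (h1 : -(e:ℤ) < a) (h2 : a < e) : a = 0 := by
  obtain ⟨c, rfl⟩ := h
  rcases lt_trichotomy c 0 with hc | hc | hc
  · have : (e:ℤ) * c ≤ (e:ℤ) * (-1) := mul_le_mul_of_nonneg_left (by omega) heZ.le
    linarith
  · simp [hc]
  · have : (e:ℤ) * 1 ≤ (e:ℤ) * c := mul_le_mul_of_nonneg_left (by omega) heZ.le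
    linarith

lemma cond_transfer (he : 0 < e) (hl : 0 < ℓ) (j k : Fin ℓ) (ξ η : ℤ) :
    ((e:ℤ) ∣ upsilon e ℓ (j.1 + 1) ξ - upsilon e ℓ (k.1 + 1) η ∧
      upsilon e ℓ (k.1 + 1) η ≤ upsilon e ℓ (j.1 + 1) ξ - (e:ℤ)) ↔
    ((e:ℤ) ∣ ξ - η ∧ η ≤ ξ - (e:ℤ) * epsZ j k) := by
  have heZ : (0:ℤ) < e := by exact_mod_cast he
  have hlZ : (0:ℤ) < ℓ := by exact_mod_cast hl
  have he' : ((e:ℤ)) ≠ 0 := heZ.ne'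
  have hX := upsilon_eq he j ξ
  have hY := upsilon_eq he k η
  have eξ := Int.mul_ediv_add_emod ξ e
  have eη := Int.mul_ediv_add_emod η e
  have hrξ0 : 0 ≤ ξ % e := Int.emod_nonneg _ he'
  have hrξe : ξ % e < e := Int.emod_lt_of_pos _ heZ
  have hrη0 : 0 ≤ η % e := Int.emod_nonneg _ he'
  have hrηe : η % e < e := Int.emod_lt_of_pos _ heZ
  have hj2 : (j.1:ℤ) ≤ (ℓ:ℤ) - 1 := by have := j.2; push_cast; omega
  have hk2 : (k.1:ℤ) ≤ (ℓ:ℤ) - 1 := by have := k.2; push_cast; omega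
  have hj0 : (0:ℤ) ≤ (j.1:ℤ) := by positivity
  have hk0 : (0:ℤ) ≤ (k.1:ℤ) := by positivity
  set P := ξ / e with hP
  set Q := η / e with hQ
  constructor
  · rintro ⟨⟨d, hd⟩, hle⟩
    rw [hX, hY] at hd hle
    have hr : ξ % e = η % e := by
      have hdiff : ξ % e - η % e = (e:ℤ) * (d - ((ℓ:ℤ) * P + ((ℓ:ℤ) - 1 - (j.1:ℤ)))
          + ((ℓ:ℤ) * Q + ((ℓ:ℤ) - 1 - (k.1:ℤ)))) := by linear_combination hd
      have := eq_zero_of_dvd_small heZ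
        ⟨d - ((ℓ:ℤ) * P + ((ℓ:ℤ) - 1 - (j.1:ℤ))) + ((ℓ:ℤ) * Q + ((ℓ:ℤ) - 1 - (k.1:ℤ))), hdiff⟩
        (by omega) (by omega)
      omega
    have hdvd2 : (e:ℤ) ∣ ξ - η := by
      refine ⟨P - Q, ?_⟩
      have hh : (e:ℤ) * (P - Q) = (e:ℤ) * P - (e:ℤ) * Q := by ring
      omega
    refine ⟨hdvd2, ?_⟩
    -- from hle : e*(ℓQ + (ℓ-1-k)) + η%e ≤ e*(ℓP + (ℓ-1-j)) + ξ%e - e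
    have hle2 : (ℓ:ℤ) * Q + ((ℓ:ℤ) - 1 - (k.1:ℤ)) ≤ (ℓ:ℤ) * P + ((ℓ:ℤ) - 1 - (j.1:ℤ)) - 1 := by
      have h1 : (e:ℤ) * ((ℓ:ℤ) * Q + ((ℓ:ℤ) - 1 - (k.1:ℤ)))
          ≤ (e:ℤ) * (((ℓ:ℤ) * P + ((ℓ:ℤ) - 1 - (j.1:ℤ))) - 1) := by
        have hexp : (e:ℤ) * (((ℓ:ℤ) * P + ((ℓ:ℤ) - 1 - (j.1:ℤ))) - 1)
            = (e:ℤ) * ((ℓ:ℤ) * P + ((ℓ:ℤ) - 1 - (j.1:ℤ))) - e := by ring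
        omega
      exact le_of_mul_le_mul_left h1 heZ
    unfold epsZ
    by_cases hkj : k ≤ j
    · rw [if_pos hkj]
      have hkjZ : (k.1:ℤ) ≤ (j.1:ℤ) := by exact_mod_cast hkj
      have hPQ : Q + 1 ≤ P := by
        by_contra hcon
        push_neg at hcon
        have : (ℓ:ℤ) * P ≤ (ℓ:ℤ) * Q := mul_le_mul_of_nonneg_left (by omega) hlZ.le
        omega
      have h1 : (e:ℤ) * (Q + 1) ≤ (e:ℤ) * P := mul_le_mul_of_nonneg_left hPQ heZ.le
      have h2 : (e:ℤ) * (Q + 1) = (e:ℤ) * Q + e := by ring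
      omega
    · rw [if_neg hkj]
      have hjkZ : (j.1:ℤ) < (k.1:ℤ) := by
        have : j < k := lt_of_not_ge hkj
        exact_mod_cast this
      by_contra hcon
      push_neg at hcon
      -- ξ < η (since e * 0 = 0)
      have hξη : ξ < η := by omega
      have hPQ : P + 1 ≤ Q := by
        by_contra hc2
        push_neg at hc2
        have : (e:ℤ) * Q ≤ (e:ℤ) * P := mul_le_mul_of_nonneg_left (by omega) heZ.le
        omega
      have : (ℓ:ℤ) * (P + 1) ≤ (ℓ:ℤ) * Q := mul_le_mul_of_nonneg_left hPQ hlZ.le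
      have hexp : (ℓ:ℤ) * (P + 1) = (ℓ:ℤ) * P + ℓ := by ring
      omega
  · rintro ⟨⟨d, hd⟩, hle⟩
    have hr : ξ % e = η % e := by
      have hdiff : ξ % e - η % e = (e:ℤ) * (d - P + Q) := by
        linear_combination hd + eξ - eη
      have := eq_zero_of_dvd_small heZ ⟨d - P + Q, hdiff⟩ (by omega) (by omega)
      omega
    have hXY : upsilon e ℓ (j.1 + 1) ξ - upsilon e ℓ (k.1 + 1) η
        = (e:ℤ) * ((ℓ:ℤ) * (P - Q) + ((k.1:ℤ) - (j.1:ℤ))) := by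
      rw [hX, hY]
      linear_combination hr
    refine ⟨⟨_, hXY⟩, ?_⟩
    have hcore : (1:ℤ) ≤ (ℓ:ℤ) * (P - Q) + ((k.1:ℤ) - (j.1:ℤ)) := by
      unfold epsZ at hle
      by_cases hkj : k ≤ j
      · rw [if_pos hkj] at hle
        have hkjZ : (k.1:ℤ) ≤ (j.1:ℤ) := by exact_mod_cast hkj
        have hPQ : 1 ≤ P - Q := by
          by_contra hcon
          push_neg at hcon
          have : (e:ℤ) * P ≤ (e:ℤ) * Q := mul_le_mul_of_nonneg_left (by omega) heZ.le
          omega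
        have : (ℓ:ℤ) * 1 ≤ (ℓ:ℤ) * (P - Q) := mul_le_mul_of_nonneg_left hPQ hlZ.le
        have hexp : (ℓ:ℤ) * (1:ℤ) = ℓ := by ring
        omega
      · rw [if_neg hkj] at hle
        have hjkZ : (j.1:ℤ) < (k.1:ℤ) := by
          have : j < k := lt_of_not_ge hkj
          exact_mod_cast this
        have hPQ : 0 ≤ P - Q := by
          by_contra hcon
          push_neg at hcon
          have : (e:ℤ) * (P + 1) ≤ (e:ℤ) * Q := mul_le_mul_of_nonneg_left (by omega) heZ.le
          have hexp : (e:ℤ) * (P + 1) = (e:ℤ) * P + e := by ring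
          omega
        have : (ℓ:ℤ) * 0 ≤ (ℓ:ℤ) * (P - Q) := mul_le_mul_of_nonneg_left hPQ hlZ.le
        omega
    have hineq := mul_le_mul_of_nonneg_left hcore heZ.le
    have hmul1 : (e:ℤ) * 1 = (e:ℤ) := by ring
    omega

lemma master (he : 0 < e) (hl : 0 < ℓ) {M : Fin ℓ → ℕ → ℕ}
    (hM : ∀ j, IsPartitionFun (M j)) (s : Fin ℓ → ℤ) :
    (wtPart e ℓ M s : ℤ) = ∑ j : Fin ℓ, ∑ k : Fin ℓ,
      ((Qset e (betaOf (M j) (s j)) (betaOf (M k) (s k)) ((e:ℤ) * epsZ j k)).ncard : ℤ) := by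
  classical
  have heZ : (0:ℤ) < e := by exact_mod_cast he
  set U := uglovMulti e ℓ M s with hU
  have hUt : Tame U := tame_uglovMulti he hl hM s
  have hBt : ∀ j : Fin ℓ, Tame (betaOf (M j) (s j)) := fun j => tame_betaOf (hM j) (s j)
  have hmain : wtPart e ℓ M s = wtSet e U := rfl
  rw [hmain, wtSet_eq_Qset he hUt]
  have hGinj : ∀ p : Fin ℓ × Fin ℓ, Function.Injective
      (fun q : ℤ × ℤ => (upsilon e ℓ (p.1.1 + 1) q.1, upsilon e ℓ (p.2.1 + 1) q.2)) := by
    rintro ⟨j, k⟩ ⟨a, b⟩ ⟨a', b'⟩ hq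
    simp only [Prod.mk.injEq] at hq
    have h1 := (ups_inj he hl hq.1).2
    have h2 := (ups_inj he hl hq.2).2
    simp [h1, h2]
  have key : Qset e U U (e:ℤ) = ⋃ p ∈ (Finset.univ : Finset (Fin ℓ × Fin ℓ)),
      (fun q : ℤ × ℤ => (upsilon e ℓ (p.1.1 + 1) q.1, upsilon e ℓ (p.2.1 + 1) q.2)) ''
        (Qset e (betaOf (M p.1) (s p.1)) (betaOf (M p.2) (s p.2)) ((e:ℤ) * epsZ p.1 p.2)) := by
    ext ⟨x, y⟩
    simp only [Set.mem_iUnion, Finset.mem_univ, Set.mem_image, Qset, Set.mem_setOf_eq,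
      Prod.mk.injEq, exists_true_left]
    constructor
    · rintro ⟨hx, hy, hdvd, hle⟩
      obtain ⟨k, η, hη⟩ := ups_surj (e := e) (ℓ := ℓ) he hl y
      have hxU : x ∈ U := hx
      rw [hU] at hxU
      unfold uglovMulti uglovU at hxU
      simp only [Set.mem_iUnion, Set.mem_image] at hxU
      obtain ⟨j, ξ, hξ, hξx⟩ := hxU
      have hηn : η ∉ betaOf (M k) (s k) := by
        intro hmem
        exact hy (by rw [← hη]; exact (mem_uglov_iff he hl).mpr hmem)
      have hcond := (cond_transfer he hl j k ξ η).mp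
        (by rw [hξx, hη]; exact ⟨hdvd, hle⟩)
      exact ⟨(j, k), (ξ, η), ⟨hξ, hηn, hcond.1, hcond.2⟩, hξx, hη⟩
    · rintro ⟨⟨j, k⟩, ⟨ξ, η⟩, ⟨hξ, hη, hdvd, hle⟩, hx, hy⟩
      subst hx; subst hy
      have hcond := (cond_transfer he hl j k ξ η).mpr ⟨hdvd, hle⟩
      refine ⟨(mem_uglov_iff he hl).mpr hξ, ?_, hcond.1, hcond.2⟩
      intro hmem
      exact hη ((mem_uglov_iff he hl).mp hmem)
  rw [key, ncard_biUnion]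
  · push_cast
    rw [← Finset.sum_product']
    apply Finset.sum_congr rfl
    rintro ⟨j, k⟩ _
    rw [Set.ncard_image_of_injective _ (hGinj (j, k))]
  · rintro ⟨j, k⟩ _
    exact (Qset_finite (hBt j) (hBt k) _).image _
  · rintro ⟨j, k⟩ _ ⟨j', k'⟩ _ hne
    rw [Set.disjoint_left]
    rintro ⟨x, y⟩ ⟨⟨a, b⟩, _, hq⟩ ⟨⟨a', b'⟩, _, hq'⟩
    simp only [Prod.mk.injEq] at hq hq'
    have h1 := ups_inj he hl (hq.1.trans hq'.1.symm)
    have h2 := ups_inj he hl (hq.2.trans hq'.2.symm)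
    exact hne (by rw [Prod.mk.injEq]; exact ⟨h1.1, h2.1⟩)

end Master

end Stmt17

namespace Stmt17

/-- relative charge -/
noncomputable def dchg (X Y : Set ℤ) : ℤ := ((X \ Y).ncard : ℤ) - ((Y \ X).ncard : ℤ)

def Rset (t : ℤ) : Set ℤ := {x : ℤ | x < t}

lemma tame_Rset (t : ℤ) : Tame (Rset t) :=
  ⟨⟨t - 1, fun x hx => by simp only [Rset, Set.mem_setOf_eq]; omega⟩,
   ⟨t - 1, fun x hx => by simp only [Rset, Set.mem_setOf_eq] at hx; omega⟩⟩

lemma diff_ncard_window {X Y T : Set ℤ} (hT : T.Finite) (h1 : X \ Y ⊆ T) (h2 : Y \ X ⊆ T) :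
    dchg X Y = ((X ∩ T).ncard : ℤ) - ((Y ∩ T).ncard : ℤ) := by
  have hXT : X ∩ T = (X ∩ Y ∩ T) ∪ (X \ Y) := by
    ext x
    constructor
    · rintro ⟨hx, ht⟩
      by_cases hy : x ∈ Y
      · exact Or.inl ⟨⟨hx, hy⟩, ht⟩
      · exact Or.inr ⟨hx, hy⟩
    · rintro (⟨⟨hx, _⟩, ht⟩ | hxy)
      · exact ⟨hx, ht⟩
      · exact ⟨hxy.1, h1 hxy⟩
  have hYT : Y ∩ T = (X ∩ Y ∩ T) ∪ (Y \ X) := by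
    ext x
    constructor
    · rintro ⟨hy, ht⟩
      by_cases hx : x ∈ X
      · exact Or.inl ⟨⟨hx, hy⟩, ht⟩
      · exact Or.inr ⟨hy, hx⟩
    · rintro (⟨⟨_, hy⟩, ht⟩ | hxy)
      · exact ⟨hy, ht⟩
      · exact ⟨hxy.1, h2 hxy⟩
  have hfin1 : (X ∩ Y ∩ T).Finite := hT.subset (Set.inter_subset_right)
  have hfinXY : (X \ Y).Finite := hT.subset h1
  have hfinYX : (Y \ X).Finite := hT.subset h2
  have hd1 : Disjoint (X ∩ Y ∩ T) (X \ Y) := by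
    rw [Set.disjoint_left]
    rintro x ⟨⟨_, hy⟩, _⟩ ⟨_, hny⟩
    exact hny hy
  have hd2 : Disjoint (X ∩ Y ∩ T) (Y \ X) := by
    rw [Set.disjoint_left]
    rintro x ⟨⟨hx, _⟩, _⟩ ⟨_, hnx⟩
    exact hnx hx
  rw [dchg, hXT, hYT, Set.ncard_union_eq hd1 hfin1 hfinXY, Set.ncard_union_eq hd2 hfin1 hfinYX]
  push_cast
  ring

lemma exists_window {X Y : Set ℤ} (hX : Tame X) (hY : Tame Y) {lo hi : ℤ}
    (hlo : ∀ x : ℤ, x ≤ lo → x ∈ X ∧ x ∈ Y) (hhi : ∀ x : ℤ, x ∈ X ∪ Y → x ≤ hi) :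
    X \ Y ⊆ Set.Icc lo hi ∧ Y \ X ⊆ Set.Icc lo hi := by
  constructor
  · rintro x ⟨hx, hny⟩
    refine ⟨?_, hhi x (Or.inl hx)⟩
    by_contra hcon
    exact hny (hlo x (by omega)).2
  · rintro x ⟨hy, hnx⟩
    refine ⟨?_, hhi x (Or.inr hy)⟩
    by_contra hcon
    exact hnx (hlo x (by omega)).1

lemma dchg_cocycle {X Y Z : Set ℤ} (hX : Tame X) (hY : Tame Y) (hZ : Tame Z) :
    dchg X Z = dchg X Y + dchg Y Z := by
  obtain ⟨⟨aX, haX⟩, ⟨bX, hbX⟩⟩ := hX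
  obtain ⟨⟨aY, haY⟩, ⟨bY, hbY⟩⟩ := hY
  obtain ⟨⟨aZ, haZ⟩, ⟨bZ, hbZ⟩⟩ := hZ
  set lo := min aX (min aY aZ) with hlo
  set hi := max bX (max bY bZ) with hhi
  have hT : (Set.Icc lo hi).Finite := Set.finite_Icc _ _
  have hmemlo : ∀ x : ℤ, x ≤ lo → x ∈ X ∧ x ∈ Y ∧ x ∈ Z := by
    intro x hx
    exact ⟨haX x (by omega), haY x (by omega), haZ x (by omega)⟩
  have hmemhi : ∀ x : ℤ, x ∈ X ∪ Y ∪ Z → x ≤ hi := by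
    rintro x ((hx | hx) | hx)
    · have := hbX x hx; omega
    · have := hbY x hx; omega
    · have := hbZ x hx; omega
  have w1 := exists_window (X := X) (Y := Z) ⟨⟨aX, haX⟩, ⟨bX, hbX⟩⟩ ⟨⟨aZ, haZ⟩, ⟨bZ, hbZ⟩⟩
    (lo := lo) (hi := hi) (fun x hx => ⟨(hmemlo x hx).1, (hmemlo x hx).2.2⟩)
    (fun x hx => hmemhi x (by rcases hx with h | h; exacts [Or.inl (Or.inl h), Or.inr h]))
  have w2 := exists_window (X := X) (Y := Y) ⟨⟨aX, haX⟩, ⟨bX, hbX⟩⟩ ⟨⟨aY, haY⟩, ⟨bY, hbY⟩⟩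
    (lo := lo) (hi := hi) (fun x hx => ⟨(hmemlo x hx).1, (hmemlo x hx).2.1⟩)
    (fun x hx => hmemhi x (by rcases hx with h | h; exacts [Or.inl (Or.inl h), Or.inl (Or.inr h)]))
  have w3 := exists_window (X := Y) (Y := Z) ⟨⟨aY, haY⟩, ⟨bY, hbY⟩⟩ ⟨⟨aZ, haZ⟩, ⟨bZ, hbZ⟩⟩
    (lo := lo) (hi := hi) (fun x hx => ⟨(hmemlo x hx).2.1, (hmemlo x hx).2.2⟩)
    (fun x hx => hmemhi x (by rcases hx with h | h; exacts [Or.inl (Or.inr h), Or.inr h]))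
  rw [diff_ncard_window hT w1.1 w1.2, diff_ncard_window hT w2.1 w2.2,
    diff_ncard_window hT w3.1 w3.2]
  ring

lemma charge_eq_dchg (B : Set ℤ) : charge B = dchg B (Rset 0) := by
  have h1 : B ∩ {x : ℤ | 0 ≤ x} = B \ Rset 0 := by
    ext x
    simp only [Set.mem_inter_iff, Set.mem_setOf_eq, Set.mem_diff, Rset]
    constructor
    · rintro ⟨ha, hb⟩; exact ⟨ha, by omega⟩
    · rintro ⟨ha, hb⟩; exact ⟨ha, by omega⟩
  have h2 : {x : ℤ | x < 0} \ B = Rset 0 \ B := rfl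
  unfold charge dchg
  rw [h1, h2]

lemma charge_Rset (t : ℤ) : charge (Rset t) = t := by
  have h1 : Rset t ∩ {x : ℤ | 0 ≤ x} = Set.Ico 0 t := by
    ext x; simp only [Rset, Set.mem_inter_iff, Set.mem_setOf_eq, Set.mem_Ico]; omega
  have h2 : {x : ℤ | x < 0} \ Rset t = Set.Ico t 0 := by
    ext x; simp only [Rset, Set.mem_diff, Set.mem_setOf_eq, Set.mem_Ico]; omega
  unfold charge
  rw [h1, h2, ← Finset.coe_Ico, ← Finset.coe_Ico, Set.ncard_coe_finset, Set.ncard_coe_finset,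
    Int.card_Ico, Int.card_Ico]
  omega

lemma shiftSet_Rset (t c : ℤ) : shiftSet (Rset t) c = Rset (t + c) := by
  ext x; simp only [mem_shiftSet, Rset, Set.mem_setOf_eq]; omega

lemma dchg_shift (X Y : Set ℤ) (c : ℤ) : dchg (shiftSet X c) (shiftSet Y c) = dchg X Y := by
  unfold dchg
  rw [shiftSet_diff, shiftSet_diff, ncard_shiftSet, ncard_shiftSet]

lemma dchg_eq_charge_sub {X Y : Set ℤ} (hX : Tame X) (hY : Tame Y) :
    dchg X Y = charge X - charge Y := by
  have h := dchg_cocycle hX hY (tame_Rset 0)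
  rw [← charge_eq_dchg, ← charge_eq_dchg] at h
  omega

lemma charge_shiftSet {B : Set ℤ} (hB : Tame B) (c : ℤ) :
    charge (shiftSet B c) = charge B + c := by
  have h1 : dchg (shiftSet B c) (Rset c) = charge B := by
    have : Rset c = shiftSet (Rset 0) c := by rw [shiftSet_Rset]; ring_nf
    rw [this, dchg_shift, ← charge_eq_dchg]
  have h2 := dchg_eq_charge_sub (tame_shiftSet hB c) (tame_Rset c)
  rw [charge_Rset] at h2
  omega

end Stmt17

namespace Stmt17

lemma charge_betaOf {p : ℕ → ℕ} (hp : IsPartitionFun p) (t : ℤ) :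
    charge (betaOf p t) = t := by
  classical
  obtain ⟨hmono, N, hN⟩ := hp
  have hpart : IsPartitionFun p := ⟨hmono, N, hN⟩
  set B := betaOf p t with hB
  suffices h : dchg B (Rset t) = 0 by
    have h2 := dchg_eq_charge_sub (tame_betaOf hpart t) (tame_Rset t)
    rw [charge_Rset] at h2
    rw [← hB] at h2
    omega
  set g : ℕ → ℤ := fun a => (a : ℤ) - (p a : ℤ) with hg
  have hgmono : ∀ a b : ℕ, a < b → g a < g b := by
    intro a b hab
    have := hmono a b hab.le
    simp only [hg]
    push_cast
    omega
  have hginj : Function.Injective g := by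
    intro a b hab
    rcases lt_trichotomy a b with hc | hc | hc
    · exact absurd hab (by have := hgmono a b hc; omega)
    · exact hc
    · exact absurd hab (by have := hgmono b a hc; omega)
  have hgN : ∀ a : ℕ, N ≤ a → g a = a := by
    intro a ha; simp [hg, hN a ha]
  have hga : ∀ a : ℕ, g a ≤ a := by
    intro a
    simp only [hg]
    have : (0:ℤ) ≤ (p a : ℤ) := by positivity
    omega
  have hmemB : ∀ k : ℕ, (t - 1 - (k : ℤ) ∈ B ↔ ∃ a : ℕ, g a = (k : ℤ)) := by
    intro k
    constructor
    · rintro ⟨a, ha⟩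
      refine ⟨a, ?_⟩
      simp only [hg]
      omega
    · rintro ⟨a, ha⟩
      refine ⟨a, ?_⟩
      simp only [hg] at ha
      omega
  set S : Set ℕ := {a : ℕ | (a : ℤ) < (p a : ℤ)} with hS
  have hSsub : S ⊆ Set.Iio N := by
    intro a ha
    simp only [hS, Set.mem_setOf_eq] at ha
    simp only [Set.mem_Iio]
    by_contra hcon
    rw [hN a (by omega)] at ha
    simp at ha
    omega
  have hSfin : S.Finite := (Set.finite_Iio N).subset hSsub
  have h1 : B \ Rset t = (fun a : ℕ => (p a : ℤ) + t - ((a : ℤ) + 1)) '' S := by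
    ext x
    constructor
    · rintro ⟨⟨a, rfl⟩, hx⟩
      refine ⟨a, ?_, rfl⟩
      simp only [Rset, Set.mem_setOf_eq, not_lt] at hx
      simp only [hS, Set.mem_setOf_eq]
      omega
    · rintro ⟨a, ha, rfl⟩
      simp only [hS, Set.mem_setOf_eq] at ha
      refine ⟨⟨a, rfl⟩, ?_⟩
      simp only [Rset, Set.mem_setOf_eq, not_lt]
      omega
  have hfinj : Set.InjOn (fun a : ℕ => (p a : ℤ) + t - ((a : ℤ) + 1)) S := by
    intro a _ b _ hab
    apply hginj
    simp only at hab
    simp only [hg]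
    omega
  have hcard1 : (B \ Rset t).ncard = S.ncard := by
    rw [h1, Set.ncard_image_of_injOn hfinj]
  set K : Set ℕ := {k : ℕ | ∀ a : ℕ, g a ≠ (k : ℤ)} with hK
  have hKsub : K ⊆ Set.Iio N := by
    intro k hk
    simp only [hK, Set.mem_setOf_eq] at hk
    simp only [Set.mem_Iio]
    by_contra hcon
    exact hk k (hgN k (by omega))
  have hKfin : K.Finite := (Set.finite_Iio N).subset hKsub
  have h2 : Rset t \ B = (fun k : ℕ => t - 1 - (k : ℤ)) '' K := by
    ext x
    constructor
    · rintro ⟨hx, hnb⟩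
      simp only [Rset, Set.mem_setOf_eq] at hx
      have hc : ((t - 1 - x).toNat : ℤ) = t - 1 - x := Int.toNat_of_nonneg (by omega)
      refine ⟨(t - 1 - x).toNat, ?_, by show t - 1 - ((t - 1 - x).toNat : ℤ) = x; omega⟩
      intro a ha
      apply hnb
      have := (hmemB (t - 1 - x).toNat).mpr ⟨a, ha⟩
      rwa [hc, show t - 1 - (t - 1 - x) = x by ring] at this
    · rintro ⟨k, hk, rfl⟩
      simp only [hK, Set.mem_setOf_eq] at hk
      constructor
      · simp only [Rset, Set.mem_setOf_eq]
        have : (0:ℤ) ≤ (k:ℤ) := by positivity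
        omega
      · intro hb
        obtain ⟨a, ha⟩ := (hmemB k).mp hb
        exact hk a ha
  have hkinj : Set.InjOn (fun k : ℕ => t - 1 - (k : ℤ)) K := by
    intro a _ b _ hab
    simp only at hab
    have : (a : ℤ) = (b : ℤ) := by omega
    exact_mod_cast this
  have hcard2 : (Rset t \ B).ncard = K.ncard := by
    rw [h2, Set.ncard_image_of_injOn hkinj]
  suffices h3 : K.ncard = S.ncard by
    unfold dchg
    rw [hcard1, hcard2]
    omega
  set A : Set ℕ := {a : ℕ | a < N ∧ 0 ≤ g a} with hA
  have hAfin : A.Finite := (Set.finite_Iio N).subset (fun a ha => ha.1)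
  set Im : Set ℕ := {k : ℕ | ∃ a : ℕ, g a = (k : ℤ)} ∩ Set.Iio N with hIm
  have hImfin : Im.Finite := (Set.finite_Iio N).subset (fun a ha => ha.2)
  have hsplit1 : Set.Iio N = K ∪ Im := by
    ext k
    constructor
    · intro hk
      by_cases hkk : k ∈ K
      · exact Or.inl hkk
      · right
        simp only [hK, Set.mem_setOf_eq, not_forall, not_not] at hkk
        exact ⟨hkk, hk⟩
    · rintro (hk | hk)
      · exact hKsub hk
      · exact hk.2
  have hdisj1 : Disjoint K Im := by
    rw [Set.disjoint_left]
    rintro k hk ⟨⟨a, ha⟩, _⟩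
    simp only [hK, Set.mem_setOf_eq] at hk
    exact hk a ha
  have hImA : Im = (fun a : ℕ => (g a).toNat) '' A := by
    ext k
    constructor
    · rintro ⟨⟨a, ha⟩, hkN⟩
      have haN : a < N := by
        by_contra hcon
        rw [hgN a (by omega)] at ha
        have : a = k := by exact_mod_cast ha
        simp only [Set.mem_Iio] at hkN
        omega
      have hga0 : (0:ℤ) ≤ g a := by rw [ha]; positivity
      have hc : (((g a).toNat : ℤ)) = g a := Int.toNat_of_nonneg hga0
      refine ⟨a, ⟨haN, hga0⟩, ?_⟩
      show (g a).toNat = k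
      omega
    · rintro ⟨a, ⟨haN, hga0⟩, hk⟩
      have hk' : (g a).toNat = k := hk
      have hc : (((g a).toNat : ℤ)) = g a := Int.toNat_of_nonneg hga0
      have hgaa := hga a
      exact ⟨⟨a, by omega⟩, by simp only [Set.mem_Iio]; omega⟩
  have hImInj : Set.InjOn (fun a : ℕ => (g a).toNat) A := by
    intro a ha b hb hab
    simp only at hab
    apply hginj
    have h1 : (((g a).toNat : ℤ)) = g a := Int.toNat_of_nonneg ha.2
    have h2 : (((g b).toNat : ℤ)) = g b := Int.toNat_of_nonneg hb.2
    rw [← h1, ← h2, hab]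
  have hsplit2 : Set.Iio N = A ∪ S := by
    ext a
    simp only [Set.mem_Iio, hA, hS, Set.mem_union, Set.mem_setOf_eq, hg]
    constructor
    · intro ha
      by_cases hc : (0:ℤ) ≤ (a:ℤ) - (p a : ℤ)
      · exact Or.inl ⟨ha, hc⟩
      · exact Or.inr (by omega)
    · rintro (⟨ha, _⟩ | ha)
      · exact ha
      · have := hSsub (a := a) (by simpa [hS] using ha)
        simpa using this
  have hdisj2 : Disjoint A S := by
    rw [Set.disjoint_left]
    rintro a ⟨_, ha⟩ has
    simp only [hS, Set.mem_setOf_eq, hg] at has ha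
    omega
  have cIio : (Set.Iio N).ncard = N := by
    rw [← Finset.coe_range, Set.ncard_coe_finset, Finset.card_range]
  have c2 : K.ncard + Im.ncard = N := by
    rw [← Set.ncard_union_eq hdisj1 hKfin hImfin, ← hsplit1, cIio]
  have c3 : Im.ncard = A.ncard := by
    rw [hImA, Set.ncard_image_of_injOn hImInj]
  have c4 : A.ncard + S.ncard = N := by
    rw [← Set.ncard_union_eq hdisj2 hAfin hSfin, ← hsplit2, cIio]
  omega

end Stmt17

namespace Stmt17

lemma shiftSet_comp (B : Set ℤ) (a b : ℤ) : shiftSet (shiftSet B a) b = shiftSet B (a + b) := by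
  ext x
  simp only [mem_shiftSet]
  constructor
  · intro h
    have h2 : x - b - a ∈ B := h
    rwa [show x - b - a = x - (a + b) by ring] at h2
  · intro h
    show x - b - a ∈ B
    rwa [show x - b - a = x - (a + b) by ring]

lemma betaOf_add (p : ℕ → ℕ) (t c : ℤ) : betaOf p (t + c) = shiftSet (betaOf p t) c := by
  ext x
  simp only [mem_betaOf, mem_shiftSet]
  constructor
  · rintro ⟨a, ha⟩; exact ⟨a, by omega⟩
  · rintro ⟨a, ha⟩; exact ⟨a, by omega⟩

lemma Qset_step {e : ℕ} (he : 0 < e) {X Y : Set ℤ} (hX : Tame X) (hY : Tame Y) (m : ℤ) :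
    (Qset e X Y ((e:ℤ) * m)).ncard
      = (Qset e X Y ((e:ℤ) * (m + 1))).ncard + (X \ shiftSet Y ((e:ℤ) * m)).ncard := by
  have heZ : (0:ℤ) < e := by exact_mod_cast he
  have hexp : (e:ℤ) * (m + 1) = (e:ℤ) * m + e := by ring
  have hsplit : Qset e X Y ((e:ℤ) * m) = Qset e X Y ((e:ℤ) * (m + 1)) ∪
      ((fun x => (x, x - (e:ℤ) * m)) '' (X \ shiftSet Y ((e:ℤ) * m))) := by
    ext ⟨x, y⟩
    simp only [Qset, Set.mem_union, Set.mem_image, Set.mem_setOf_eq, Set.mem_diff,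
      Prod.mk.injEq, mem_shiftSet]
    constructor
    · rintro ⟨hx, hy, ⟨d, hd⟩, hle⟩
      by_cases hc : y ≤ x - (e:ℤ) * (m + 1)
      · exact Or.inl ⟨hx, hy, ⟨d, hd⟩, hc⟩
      · right
        push_neg at hc
        have hdm : d = m := by
          have hdl : (e:ℤ) * m ≤ (e:ℤ) * d := by omega
          have hdu : (e:ℤ) * d < (e:ℤ) * (m + 1) := by omega
          have h1 : m ≤ d := le_of_mul_le_mul_left hdl heZ
          have h2 : d < m + 1 := lt_of_mul_lt_mul_left hdu heZ.le
          omega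
        have hed : (e:ℤ) * d = (e:ℤ) * m := by rw [hdm]
        have hyeq : y = x - (e:ℤ) * m := by omega
        refine ⟨x, ⟨hx, ?_⟩, rfl, by omega⟩
        intro hmem
        exact hy (by rwa [← hyeq] at hmem)
    · rintro (⟨hx, hy, hdvd, hle⟩ | ⟨x', ⟨hx, hy⟩, h1, h2⟩)
      · exact ⟨hx, hy, hdvd, by omega⟩
      · refine ⟨h1 ▸ hx, ?_, ⟨m, by omega⟩, by omega⟩
        intro hmem
        exact hy (by rwa [h2])
  have hfin1 : (Qset e X Y ((e:ℤ) * (m+1))).Finite := Qset_finite hX hY _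
  have hfin2 : (X \ shiftSet Y ((e:ℤ) * m)).Finite := diff_finite hX (tame_shiftSet hY _)
  have hdisj : Disjoint (Qset e X Y ((e:ℤ) * (m + 1)))
      ((fun x => (x, x - (e:ℤ) * m)) '' (X \ shiftSet Y ((e:ℤ) * m))) := by
    rw [Set.disjoint_left]
    rintro ⟨x, y⟩ ⟨_, _, _, hle⟩ ⟨x', _, heq⟩
    simp only [Prod.mk.injEq] at heq
    obtain ⟨h1, h2⟩ := heq
    omega
  have hinj : Function.Injective (fun x : ℤ => (x, x - (e:ℤ) * m)) := by
    intro a b hab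
    simpa using congrArg Prod.fst hab
  rw [hsplit, Set.ncard_union_eq hdisj hfin1 (hfin2.image _),
    Set.ncard_image_of_injective _ hinj]

lemma Qset_shift {e : ℕ} (a b m : ℤ) (X Y : Set ℤ) :
    Qset e (shiftSet X ((e:ℤ) * a)) (shiftSet Y ((e:ℤ) * b)) ((e:ℤ) * m)
      = (fun q : ℤ × ℤ => (q.1 + (e:ℤ) * a, q.2 + (e:ℤ) * b)) ''
          Qset e X Y ((e:ℤ) * (m + b - a)) := by
  ext ⟨x, y⟩
  simp only [Qset, Set.mem_image, Set.mem_setOf_eq, Prod.mk.injEq, mem_shiftSet]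
  constructor
  · rintro ⟨hx, hy, ⟨d, hd⟩, hle⟩
    refine ⟨(x - (e:ℤ) * a, y - (e:ℤ) * b), ⟨hx, hy, ⟨d - a + b, by linear_combination hd⟩, ?_⟩,
      by ring, by ring⟩
    have hexp : (e:ℤ) * (m + b - a) = (e:ℤ) * m + (e:ℤ) * b - (e:ℤ) * a := by ring
    omega
  · rintro ⟨⟨x', y'⟩, ⟨hx, hy, ⟨d, hd⟩, hle⟩, h1, h2⟩
    simp only at h1 h2
    subst h1; subst h2
    have hexp : (e:ℤ) * (m + b - a) = (e:ℤ) * m + (e:ℤ) * b - (e:ℤ) * a := by ring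
    refine ⟨by simpa using hx, by simpa using hy, ⟨d + a - b, by linear_combination hd⟩, by omega⟩

lemma ncard_Qset_shift {e : ℕ} (a b m : ℤ) (X Y : Set ℤ) :
    (Qset e (shiftSet X ((e:ℤ) * a)) (shiftSet Y ((e:ℤ) * b)) ((e:ℤ) * m)).ncard
      = (Qset e X Y ((e:ℤ) * (m + b - a))).ncard := by
  rw [Qset_shift]
  apply Set.ncard_image_of_injective
  rintro ⟨x1, y1⟩ ⟨x2, y2⟩ hq
  simp only [Prod.mk.injEq] at hq
  exact Prod.ext (by omega) (by omega)

lemma diff_charge {X Y : Set ℤ} (hX : Tame X) (hY : Tame Y) (c : ℤ) :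
    ((X \ shiftSet Y c).ncard : ℤ) - ((Y \ shiftSet X (-c)).ncard : ℤ)
      = charge X - charge Y - c := by
  have h1 : Y \ shiftSet X (-c) = shiftSet (shiftSet Y c \ X) (-c) := by
    rw [← shiftSet_diff, shiftSet_comp, show c + -c = 0 by ring, shiftSet_zero]
  have h2 : ((Y \ shiftSet X (-c)).ncard : ℤ) = ((shiftSet Y c \ X).ncard : ℤ) := by
    rw [h1, ncard_shiftSet]
  rw [h2]
  have h3 := dchg_eq_charge_sub hX (tame_shiftSet hY c)
  rw [charge_shiftSet hY c] at h3
  unfold dchg at h3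
  omega

end Stmt17

namespace Stmt17

noncomputable def Hfun (e ℓ : ℕ) (s : Fin ℓ → ℤ) : ℤ :=
  ∑ j : Fin ℓ, ∑ k : Fin ℓ, epsZ j k * ((s j - s k) * (s j - s k - (e:ℤ)))

noncomputable def Ifun (e ℓ : ℕ) (M : Fin ℓ → ℕ → ℕ) (s : Fin ℓ → ℤ) : ℤ :=
  2 * (e:ℤ) * (wtPart e ℓ M s : ℤ) - Hfun e ℓ s

lemma epsZ_cases {ℓ : ℕ} (j k : Fin ℓ) : epsZ j k = 0 ∨ epsZ j k = 1 := by
  unfold epsZ; split <;> simp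

lemma epsZ_self {ℓ : ℕ} (j : Fin ℓ) : epsZ j j = 1 := by
  unfold epsZ; rw [if_pos le_rfl]

lemma epsZ_add {ℓ : ℕ} {j k : Fin ℓ} (h : j ≠ k) : epsZ j k + epsZ k j = 1 := by
  unfold epsZ
  rcases lt_or_gt_of_ne h with hc | hc
  · rw [if_neg (not_le.mpr hc), if_pos hc.le]; ring
  · rw [if_pos hc.le, if_neg (not_le.mpr hc)]; ring

lemma sum_reindex {ℓ : ℕ} (σ : Equiv.Perm (Fin ℓ)) (g : Fin ℓ → Fin ℓ → ℤ) :
    ∑ j : Fin ℓ, ∑ k : Fin ℓ, g (σ j) (σ k) = ∑ j : Fin ℓ, ∑ k : Fin ℓ, g j k := by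
  calc ∑ j : Fin ℓ, ∑ k : Fin ℓ, g (σ j) (σ k)
      = ∑ j : Fin ℓ, ∑ k : Fin ℓ, g (σ j) k := by
        apply Finset.sum_congr rfl
        intro j _
        exact Equiv.sum_comp σ (g (σ j))
    _ = ∑ j : Fin ℓ, ∑ k : Fin ℓ, g j k := Equiv.sum_comp σ (fun x => ∑ k, g x k)

lemma sum_pair_antisym {ℓ : ℕ} (c f : Fin ℓ → Fin ℓ → ℤ) (hc : ∀ j k, c k j = - c j k) :
    2 * (∑ j : Fin ℓ, ∑ k : Fin ℓ, c j k * f j k)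
      = ∑ j : Fin ℓ, ∑ k : Fin ℓ, c j k * (f j k - f k j) := by
  have h1 : ∑ j : Fin ℓ, ∑ k : Fin ℓ, c j k * f k j
      = - ∑ j : Fin ℓ, ∑ k : Fin ℓ, c j k * f j k := by
    rw [Finset.sum_comm]
    calc ∑ k : Fin ℓ, ∑ j : Fin ℓ, c j k * f k j
        = ∑ k : Fin ℓ, ∑ j : Fin ℓ, -(c k j * f k j) := by
          apply Finset.sum_congr rfl
          intro k _
          apply Finset.sum_congr rfl
          intro j _
          rw [hc j k]
          ring
      _ = - ∑ k : Fin ℓ, ∑ j : Fin ℓ, c k j * f k j := by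
          simp [Finset.sum_neg_distrib]
  have h2 : ∑ j : Fin ℓ, ∑ k : Fin ℓ, c j k * (f j k - f k j)
      = (∑ j : Fin ℓ, ∑ k : Fin ℓ, c j k * f j k)
        - ∑ j : Fin ℓ, ∑ k : Fin ℓ, c j k * f k j := by
    rw [← Finset.sum_sub_distrib]
    apply Finset.sum_congr rfl
    intro j _
    rw [← Finset.sum_sub_distrib]
    apply Finset.sum_congr rfl
    intro k _
    ring
  rw [h2, h1]
  ring

lemma Ifun_perm {e ℓ : ℕ} (he : 0 < e) (hl : 0 < ℓ) {M : Fin ℓ → ℕ → ℕ}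
    (hM : ∀ j, IsPartitionFun (M j)) (s : Fin ℓ → ℤ) (σ : Equiv.Perm (Fin ℓ)) :
    Ifun e ℓ (fun j => M (σ j)) (fun j => s (σ j)) = Ifun e ℓ M s := by
  classical
  set B : Fin ℓ → Set ℤ := fun j => betaOf (M j) (s j) with hB
  have hBt : ∀ j, Tame (B j) := fun j => tame_betaOf (hM j) (s j)
  have hch : ∀ j, charge (B j) = s j := fun j => charge_betaOf (hM j) (s j)
  set q : Fin ℓ → Fin ℓ → ℤ → ℤ :=
    fun j k c => ((Qset e (B j) (B k) ((e:ℤ) * c)).ncard : ℤ) with hq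
  set n : Fin ℓ → Fin ℓ → ℤ := fun j k => ((B j \ B k).ncard : ℤ) with hn
  have hqe : ∀ (j k : Fin ℓ) (c : ℤ), (c = 0 ∨ c = 1) → q j k c = q j k 1 + (1 - c) * n j k := by
    rintro j k c (rfl | rfl)
    · have hstep := Qset_step he (hBt j) (hBt k) 0
      simp only [zero_add, mul_zero, shiftSet_zero] at hstep
      simp only [hq, hn, mul_zero]
      rw [hstep]
      push_cast
      ring
    · ring
  have hWσ : (wtPart e ℓ (fun j => M (σ j)) (fun j => s (σ j)) : ℤ)
      = ∑ j : Fin ℓ, ∑ k : Fin ℓ, q (σ j) (σ k) (epsZ j k) := by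
    rw [master he hl (fun j => hM (σ j)) (fun j => s (σ j))]
  have hW : (wtPart e ℓ M s : ℤ) = ∑ j : Fin ℓ, ∑ k : Fin ℓ, q j k (epsZ j k) := by
    rw [master he hl hM s]
  have hres : ∑ j : Fin ℓ, ∑ k : Fin ℓ, q (σ j) (σ k) (epsZ j k)
      = ∑ j : Fin ℓ, ∑ k : Fin ℓ, q j k (epsZ (σ⁻¹ j) (σ⁻¹ k)) := by
    have h := sum_reindex σ (fun j k => q j k (epsZ (σ⁻¹ j) (σ⁻¹ k)))
    simp only [Equiv.Perm.coe_inv, Equiv.symm_apply_apply] at h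
    exact h
  set c : Fin ℓ → Fin ℓ → ℤ := fun j k => epsZ j k - epsZ (σ⁻¹ j) (σ⁻¹ k) with hcdef
  have hcanti : ∀ j k, c k j = - c j k := by
    intro j k
    by_cases hjk : j = k
    · subst hjk
      simp [hcdef, epsZ_self]
    · have hinj : σ⁻¹ j ≠ σ⁻¹ k := fun hh => hjk (by simpa using congrArg σ hh)
      have h1 := epsZ_add hjk
      have h1' := epsZ_add (Ne.symm hjk)
      have h2 := epsZ_add hinj
      have h2' := epsZ_add (Ne.symm hinj)
      simp only [hcdef]
      omega
  have hDW : (wtPart e ℓ (fun j => M (σ j)) (fun j => s (σ j)) : ℤ) - (wtPart e ℓ M s : ℤ)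
      = ∑ j : Fin ℓ, ∑ k : Fin ℓ, c j k * n j k := by
    rw [hWσ, hres, hW, ← Finset.sum_sub_distrib]
    apply Finset.sum_congr rfl
    intro j _
    rw [← Finset.sum_sub_distrib]
    apply Finset.sum_congr rfl
    intro k _
    rw [hqe j k _ (epsZ_cases _ _), hqe j k _ (epsZ_cases _ _)]
    simp only [hcdef]
    ring
  have hnchg : ∀ j k : Fin ℓ, n j k - n k j = s j - s k := by
    intro j k
    have h := diff_charge (hBt j) (hBt k) 0
    simp only [neg_zero, shiftSet_zero] at h
    rw [hch, hch] at h
    simp only [hn]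
    omega
  have h2W : 2 * ((wtPart e ℓ (fun j => M (σ j)) (fun j => s (σ j)) : ℤ)
      - (wtPart e ℓ M s : ℤ)) = ∑ j : Fin ℓ, ∑ k : Fin ℓ, c j k * (s j - s k) := by
    rw [hDW, sum_pair_antisym c n hcanti]
    apply Finset.sum_congr rfl
    intro j _
    apply Finset.sum_congr rfl
    intro k _
    rw [hnchg]
  have hHσ : Hfun e ℓ (fun j => s (σ j))
      = ∑ j : Fin ℓ, ∑ k : Fin ℓ, epsZ (σ⁻¹ j) (σ⁻¹ k) * ((s j - s k) * (s j - s k - (e:ℤ))) := by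
    unfold Hfun
    have h := sum_reindex σ
      (fun j k => epsZ (σ⁻¹ j) (σ⁻¹ k) * ((s j - s k) * (s j - s k - (e:ℤ))))
    simp only [Equiv.Perm.coe_inv, Equiv.symm_apply_apply] at h
    exact h
  have hDH : Hfun e ℓ s - Hfun e ℓ (fun j => s (σ j))
      = ∑ j : Fin ℓ, ∑ k : Fin ℓ, c j k * ((s j - s k) * (s j - s k - (e:ℤ))) := by
    rw [hHσ]
    unfold Hfun
    rw [← Finset.sum_sub_distrib]
    apply Finset.sum_congr rfl
    intro j _
    rw [← Finset.sum_sub_distrib]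
    apply Finset.sum_congr rfl
    intro k _
    simp only [hcdef]
    ring
  have h2H : 2 * (Hfun e ℓ s - Hfun e ℓ (fun j => s (σ j)))
      = ∑ j : Fin ℓ, ∑ k : Fin ℓ, (-(2 * (e:ℤ))) * (c j k * (s j - s k)) := by
    rw [hDH, sum_pair_antisym c (fun j k => (s j - s k) * (s j - s k - (e:ℤ))) hcanti]
    apply Finset.sum_congr rfl
    intro j _
    apply Finset.sum_congr rfl
    intro k _
    ring
  have hfact : ∑ j : Fin ℓ, ∑ k : Fin ℓ, (-(2 * (e:ℤ))) * (c j k * (s j - s k))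
      = (-(2 * (e:ℤ))) * ∑ j : Fin ℓ, ∑ k : Fin ℓ, c j k * (s j - s k) := by
    rw [Finset.mul_sum]
    apply Finset.sum_congr rfl
    intro j _
    rw [Finset.mul_sum]
  unfold Ifun
  have heq : 2 * ((2 * (e:ℤ) * (wtPart e ℓ (fun j => M (σ j)) (fun j => s (σ j)) : ℤ)
      - Hfun e ℓ (fun j => s (σ j))) - (2 * (e:ℤ) * (wtPart e ℓ M s : ℤ) - Hfun e ℓ s))
      = 2 * (e:ℤ) * (2 * ((wtPart e ℓ (fun j => M (σ j)) (fun j => s (σ j)) : ℤ)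
        - (wtPart e ℓ M s : ℤ)))
        + 2 * (Hfun e ℓ s - Hfun e ℓ (fun j => s (σ j))) := by ring
  have hzero : 2 * ((2 * (e:ℤ) * (wtPart e ℓ (fun j => M (σ j)) (fun j => s (σ j)) : ℤ)
      - Hfun e ℓ (fun j => s (σ j))) - (2 * (e:ℤ) * (wtPart e ℓ M s : ℤ) - Hfun e ℓ s)) = 0 := by
    rw [heq, h2W, h2H, hfact]
    ring
  omega

end Stmt17

namespace Stmt17

lemma sum_single_pair {ℓ : ℕ} (x : Fin ℓ) (F : Fin ℓ → Fin ℓ → ℤ)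
    (h0 : ∀ j k, j ≠ x → k ≠ x → F j k = 0) (hxx : F x x = 0) :
    ∑ j : Fin ℓ, ∑ k : Fin ℓ, F j k = ∑ k : Fin ℓ, (F x k + F k x) := by
  classical
  have step1 : ∀ j : Fin ℓ, j ≠ x → ∑ k : Fin ℓ, F j k = F j x := by
    intro j hj
    apply Finset.sum_eq_single x
    · intro b _ hb
      exact h0 j b hj hb
    · intro hx
      exact absurd (Finset.mem_univ x) hx
  have hsplit : ∑ j : Fin ℓ, ∑ k : Fin ℓ, F j k
      = (∑ k : Fin ℓ, F x k) + ∑ j ∈ Finset.univ.erase x, F j x := by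
    rw [← Finset.add_sum_erase _ _ (Finset.mem_univ x)]
    congr 1
    apply Finset.sum_congr rfl
    intro j hj
    exact step1 j (Finset.ne_of_mem_erase hj)
  rw [hsplit, Finset.sum_add_distrib]
  congr 1
  rw [← Finset.add_sum_erase _ (fun j => F j x) (Finset.mem_univ x), hxx, zero_add]

lemma ncard_Qset_shiftL {e : ℕ} (a m : ℤ) (X Y : Set ℤ) :
    (Qset e (shiftSet X ((e:ℤ) * a)) Y ((e:ℤ) * m)).ncard
      = (Qset e X Y ((e:ℤ) * (m - a))).ncard := by
  calc (Qset e (shiftSet X ((e:ℤ) * a)) Y ((e:ℤ) * m)).ncard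
      = (Qset e (shiftSet X ((e:ℤ) * a)) (shiftSet Y ((e:ℤ) * 0)) ((e:ℤ) * m)).ncard := by
        rw [mul_zero, shiftSet_zero]
    _ = (Qset e X Y ((e:ℤ) * (m + 0 - a))).ncard := ncard_Qset_shift a 0 m X Y
    _ = (Qset e X Y ((e:ℤ) * (m - a))).ncard := by rw [show m + 0 - a = m - a by ring]

lemma ncard_Qset_shiftR {e : ℕ} (b m : ℤ) (X Y : Set ℤ) :
    (Qset e X (shiftSet Y ((e:ℤ) * b)) ((e:ℤ) * m)).ncard
      = (Qset e X Y ((e:ℤ) * (m + b))).ncard := by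
  calc (Qset e X (shiftSet Y ((e:ℤ) * b)) ((e:ℤ) * m)).ncard
      = (Qset e (shiftSet X ((e:ℤ) * 0)) (shiftSet Y ((e:ℤ) * b)) ((e:ℤ) * m)).ncard := by
        rw [mul_zero, shiftSet_zero]
    _ = (Qset e X Y ((e:ℤ) * (m + b - 0))).ncard := ncard_Qset_shift 0 b m X Y
    _ = (Qset e X Y ((e:ℤ) * (m + b))).ncard := by rw [show m + b - 0 = m + b by ring]

lemma Ifun_update {e ℓ : ℕ} (he : 0 < e) (hl : 0 < ℓ) {M : Fin ℓ → ℕ → ℕ}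
    (hM : ∀ j, IsPartitionFun (M j)) (s : Fin ℓ → ℤ) (x : Fin ℓ) :
    Ifun e ℓ M (Function.update s x (s x + (e:ℤ))) = Ifun e ℓ M s := by
  classical
  have heZ : (0:ℤ) < e := by exact_mod_cast he
  set s' := Function.update s x (s x + (e:ℤ)) with hs'
  set B : Fin ℓ → Set ℤ := fun j => betaOf (M j) (s j) with hB
  have hBt : ∀ j, Tame (B j) := fun j => tame_betaOf (hM j) (s j)
  have hch : ∀ j, charge (B j) = s j := fun j => charge_betaOf (hM j) (s j)
  have hs'x : s' x = s x + (e:ℤ) := by rw [hs']; simp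
  have hs'j : ∀ j, j ≠ x → s' j = s j := by
    intro j hj
    rw [hs']
    exact Function.update_of_ne hj _ _
  have hB'x : betaOf (M x) (s' x) = shiftSet (B x) ((e:ℤ) * 1) := by
    rw [hs'x, betaOf_add, mul_one]
  have hB'j : ∀ j, j ≠ x → betaOf (M j) (s' j) = B j := by
    intro j hj
    rw [hs'j j hj]
  set n2 : Fin ℓ → Fin ℓ → ℤ → ℤ :=
    fun j k m => ((B j \ shiftSet (B k) ((e:ℤ) * m)).ncard : ℤ) with hn2
  set E : Fin ℓ → Fin ℓ → ℤ := fun j k =>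
    if j = x ∧ ¬ k = x then n2 x k (epsZ x k - 1)
    else if k = x ∧ ¬ j = x then - n2 j x (epsZ j x)
    else 0 with hE
  have hT : ∀ j k : Fin ℓ,
      ((Qset e (betaOf (M j) (s' j)) (betaOf (M k) (s' k)) ((e:ℤ) * epsZ j k)).ncard : ℤ)
      = ((Qset e (B j) (B k) ((e:ℤ) * epsZ j k)).ncard : ℤ) + E j k := by
    intro j k
    by_cases hj : j = x <;> by_cases hk : k = x
    · rw [hj, hk, hB'x, ncard_Qset_shift 1 1 _ _ _,
        show epsZ x x + 1 - 1 = epsZ x x from by ring]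
      simp [hE]
    · rw [hj, hB'x, hB'j k hk, ncard_Qset_shiftL 1 _ _ _]
      have hstep := Qset_step he (hBt x) (hBt k) (epsZ x k - 1)
      rw [show epsZ x k - 1 + 1 = epsZ x k from by ring] at hstep
      rw [hstep]
      simp only [hE, hn2]
      rw [if_pos (by simp [hk])]
      push_cast
      ring
    · rw [hk, hB'x, hB'j j hj, ncard_Qset_shiftR 1 _ _ _]
      have hstep := Qset_step he (hBt j) (hBt x) (epsZ j x)
      rw [hstep]
      simp only [hE, hn2]
      rw [if_neg (by tauto), if_pos (by simp [hj])]
      push_cast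
      ring
    · rw [hB'j j hj, hB'j k hk]
      simp only [hE]
      rw [if_neg (by tauto), if_neg (by tauto)]
      ring
  have hW' : (wtPart e ℓ M s' : ℤ)
      = (wtPart e ℓ M s : ℤ) + ∑ j : Fin ℓ, ∑ k : Fin ℓ, E j k := by
    rw [master he hl hM s', master he hl hM s]
    rw [← Finset.sum_add_distrib]
    apply Finset.sum_congr rfl
    intro j _
    rw [← Finset.sum_add_distrib]
    apply Finset.sum_congr rfl
    intro k _
    exact hT j k
  have hE0 : ∀ j k, j ≠ x → k ≠ x → E j k = 0 := by
    intro j k hj hk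
    simp only [hE]
    rw [if_neg (by tauto), if_neg (by tauto)]
  have hExx : E x x = 0 := by
    simp only [hE]
    rw [if_neg (by tauto), if_neg (by tauto)]
  have hEcol : ∑ j : Fin ℓ, ∑ k : Fin ℓ, E j k = ∑ k : Fin ℓ, (E x k + E k x) :=
    sum_single_pair x E hE0 hExx
  set HF : Fin ℓ → Fin ℓ → ℤ := fun j k =>
    epsZ j k * ((s' j - s' k) * (s' j - s' k - (e:ℤ)))
      - epsZ j k * ((s j - s k) * (s j - s k - (e:ℤ))) with hHF
  have hHdiff : Hfun e ℓ s' - Hfun e ℓ s = ∑ j : Fin ℓ, ∑ k : Fin ℓ, HF j k := by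
    unfold Hfun
    rw [← Finset.sum_sub_distrib]
    apply Finset.sum_congr rfl
    intro j _
    rw [← Finset.sum_sub_distrib]
  have hHF0 : ∀ j k, j ≠ x → k ≠ x → HF j k = 0 := by
    intro j k hj hk
    simp only [hHF]
    rw [hs'j j hj, hs'j k hk]
    ring
  have hHFxx : HF x x = 0 := by
    simp only [hHF]
    ring
  have hHcol : Hfun e ℓ s' - Hfun e ℓ s = ∑ k : Fin ℓ, (HF x k + HF k x) := by
    rw [hHdiff]
    exact sum_single_pair x HF hHF0 hHFxx
  have hper : ∀ k : Fin ℓ, 2 * (e:ℤ) * (E x k + E k x) = HF x k + HF k x := by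
    intro k
    by_cases hk : k = x
    · subst hk
      rw [hExx, hHFxx]
      ring
    · have hkx : k ≠ x := hk
      have hEx : E x k = n2 x k (epsZ x k - 1) := by
        simp only [hE]
        rw [if_pos (by simp [hkx])]
      have hEk : E k x = - n2 k x (epsZ k x) := by
        simp only [hE]
        rw [if_neg (by tauto), if_pos (by simp [hkx])]
      have hHFx : HF x k = epsZ x k * ((s x + (e:ℤ) - s k) * (s x + (e:ℤ) - s k - (e:ℤ)))
          - epsZ x k * ((s x - s k) * (s x - s k - (e:ℤ))) := by
        simp only [hHF]
        rw [hs'x, hs'j k hkx]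
      have hHFk : HF k x = epsZ k x * ((s k - (s x + (e:ℤ))) * (s k - (s x + (e:ℤ)) - (e:ℤ)))
          - epsZ k x * ((s k - s x) * (s k - s x - (e:ℤ))) := by
        simp only [hHF]
        rw [hs'x, hs'j k hkx]
      rcases Ne.lt_or_gt hkx with hlt | hlt
      · -- k < x
        have he1 : epsZ x k = 1 := by unfold epsZ; rw [if_pos hlt.le]
        have he2 : epsZ k x = 0 := by unfold epsZ; rw [if_neg (not_le.mpr hlt)]
        have hdc := diff_charge (hBt x) (hBt k) 0
        simp only [neg_zero, shiftSet_zero] at hdc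
        rw [hch, hch] at hdc
        have hval : E x k + E k x = s x - s k := by
          rw [hEx, hEk, he1, he2]
          simp only [hn2]
          rw [show (1:ℤ) - 1 = 0 from by ring]
          rw [mul_zero, shiftSet_zero, shiftSet_zero]
          omega
        rw [hval, hHFx, hHFk, he1, he2]
        ring
      · -- x < k
        have he1 : epsZ x k = 0 := by unfold epsZ; rw [if_neg (not_le.mpr hlt)]
        have he2 : epsZ k x = 1 := by unfold epsZ; rw [if_pos hlt.le]
        have hdc := diff_charge (hBt x) (hBt k) (-(e:ℤ))
        rw [hch, hch] at hdc
        have hval : E x k + E k x = s x - s k + (e:ℤ) := by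
          rw [hEx, hEk, he1, he2]
          simp only [hn2]
          rw [show (e:ℤ) * ((0:ℤ) - 1) = -(e:ℤ) from by ring, mul_one]
          rw [show (- -(e:ℤ)) = ((e:ℤ) : ℤ) from by ring] at hdc
          omega
        rw [hval, hHFx, hHFk, he1, he2]
        ring
  have hfinal : ∑ k : Fin ℓ, (2 * (e:ℤ) * (E x k + E k x)) = ∑ k : Fin ℓ, (HF x k + HF k x) :=
    Finset.sum_congr rfl (fun k _ => hper k)
  have hfact : ∑ k : Fin ℓ, (2 * (e:ℤ) * (E x k + E k x))
      = 2 * (e:ℤ) * ∑ k : Fin ℓ, (E x k + E k x) := by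
    rw [Finset.mul_sum]
  unfold Ifun
  rw [hW']
  have hH' : Hfun e ℓ s' = Hfun e ℓ s + ∑ k : Fin ℓ, (HF x k + HF k x) := by omega
  rw [hH', ← hfinal, hfact, hEcol]
  ring

end Stmt17

namespace Stmt17

lemma Ifun_translate_all {e ℓ : ℕ} (he : 0 < e) (hl : 0 < ℓ) {M : Fin ℓ → ℕ → ℕ}
    (hM : ∀ j, IsPartitionFun (M j)) (s : Fin ℓ → ℤ) (v : Fin ℓ → ℤ) :
    Ifun e ℓ M (fun j => s j + (e:ℤ) * v j) = Ifun e ℓ M s := by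
  classical
  suffices h : ∀ (N : ℕ) (v : Fin ℓ → ℤ), (∑ j : Fin ℓ, (v j).natAbs) = N →
      Ifun e ℓ M (fun j => s j + (e:ℤ) * v j) = Ifun e ℓ M s by
    exact h _ v rfl
  intro N
  induction N using Nat.strong_induction_on with
  | _ N ih =>
    intro v hv
    by_cases h0 : ∀ j, v j = 0
    · have hzz : (fun j => s j + (e:ℤ) * v j) = s := by
        funext j
        rw [h0 j]
        ring
      rw [hzz]
    · push_neg at h0
      obtain ⟨x, hx⟩ := h0
      rcases lt_or_gt_of_ne hx with hneg | hpos
      · set v' := Function.update v x (v x + 1) with hv'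
        have hvx' : v' x = v x + 1 := by rw [hv']; simp
        have hvj' : ∀ j, j ≠ x → v' j = v j := by
          intro j hj
          rw [hv']
          exact Function.update_of_ne hj _ _
        have hsum : (∑ j : Fin ℓ, (v' j).natAbs) < N := by
          rw [← hv]
          have h1 : (v' x).natAbs + ∑ j ∈ Finset.univ.erase x, (v' j).natAbs
              = ∑ j : Fin ℓ, (v' j).natAbs :=
            Finset.add_sum_erase Finset.univ (fun j => (v' j).natAbs) (Finset.mem_univ x)
          have h2 : (v x).natAbs + ∑ j ∈ Finset.univ.erase x, (v j).natAbs
              = ∑ j : Fin ℓ, (v j).natAbs :=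
            Finset.add_sum_erase Finset.univ (fun j => (v j).natAbs) (Finset.mem_univ x)
          have h3 : ∑ j ∈ Finset.univ.erase x, (v' j).natAbs
              = ∑ j ∈ Finset.univ.erase x, (v j).natAbs :=
            Finset.sum_congr rfl (fun j hj => by rw [hvj' j (Finset.ne_of_mem_erase hj)])
          have h4 : (v' x).natAbs < (v x).natAbs := by rw [hvx']; omega
          omega
        have heq : Function.update (fun j => s j + (e:ℤ) * v j) x
            ((fun j => s j + (e:ℤ) * v j) x + (e:ℤ)) = fun j => s j + (e:ℤ) * v' j := by
          funext j
          by_cases hjx : j = x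
          · subst hjx
            rw [Function.update_self]
            show s j + (e:ℤ) * v j + (e:ℤ) = s j + (e:ℤ) * v' j
            rw [hvx']
            ring
          · rw [Function.update_of_ne hjx]
            show s j + (e:ℤ) * v j = s j + (e:ℤ) * v' j
            rw [hvj' j hjx]
        have key := Ifun_update he hl hM (fun j => s j + (e:ℤ) * v j) x
        rw [heq] at key
        rw [← key]
        exact ih _ hsum v' rfl
      · set v' := Function.update v x (v x - 1) with hv'
        have hvx' : v' x = v x - 1 := by rw [hv']; simp
        have hvj' : ∀ j, j ≠ x → v' j = v j := by
          intro j hj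
          rw [hv']
          exact Function.update_of_ne hj _ _
        have hsum : (∑ j : Fin ℓ, (v' j).natAbs) < N := by
          rw [← hv]
          have h1 : (v' x).natAbs + ∑ j ∈ Finset.univ.erase x, (v' j).natAbs
              = ∑ j : Fin ℓ, (v' j).natAbs :=
            Finset.add_sum_erase Finset.univ (fun j => (v' j).natAbs) (Finset.mem_univ x)
          have h2 : (v x).natAbs + ∑ j ∈ Finset.univ.erase x, (v j).natAbs
              = ∑ j : Fin ℓ, (v j).natAbs :=
            Finset.add_sum_erase Finset.univ (fun j => (v j).natAbs) (Finset.mem_univ x)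
          have h3 : ∑ j ∈ Finset.univ.erase x, (v' j).natAbs
              = ∑ j ∈ Finset.univ.erase x, (v j).natAbs :=
            Finset.sum_congr rfl (fun j hj => by rw [hvj' j (Finset.ne_of_mem_erase hj)])
          have h4 : (v' x).natAbs < (v x).natAbs := by rw [hvx']; omega
          omega
        have heq : Function.update (fun j => s j + (e:ℤ) * v' j) x
            ((fun j => s j + (e:ℤ) * v' j) x + (e:ℤ)) = fun j => s j + (e:ℤ) * v j := by
          funext j
          by_cases hjx : j = x
          · subst hjx
            rw [Function.update_self]
            show s j + (e:ℤ) * v' j + (e:ℤ) = s j + (e:ℤ) * v j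
            rw [hvx']
            ring
          · rw [Function.update_of_ne hjx]
            show s j + (e:ℤ) * v' j = s j + (e:ℤ) * v j
            rw [hvj' j hjx]
        have key := Ifun_update he hl hM (fun j => s j + (e:ℤ) * v' j) x
        rw [heq] at key
        rw [key]
        exact ih _ hsum v' rfl

lemma Ifun_orbit {e ℓ : ℕ} (he : 0 < e) (hl : 0 < ℓ) {Λ : Fin ℓ → ℕ → ℕ}
    (hΛ : ∀ j, IsPartitionFun (Λ j)) (t : Fin ℓ → ℤ) (σ : Equiv.Perm (Fin ℓ))
    (v : Fin ℓ → ℤ) :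
    Ifun e ℓ (fun j => Λ (σ j)) (fun j => t (σ j) + (e:ℤ) * v j) = Ifun e ℓ Λ t := by
  have h1 := Ifun_perm he hl hΛ t σ
  have h2 := Ifun_translate_all he hl (fun j => hΛ (σ j)) (fun j => t (σ j)) v
  exact h2.trans h1

/-- φ(d) = (d mod e)(e − d mod e). -/
def phiF (e : ℕ) (d : ℤ) : ℤ := (d % e) * ((e:ℤ) - d % e)

lemma phiF_nonneg {e : ℕ} (he : 0 < e) (d : ℤ) : 0 ≤ phiF e d := by
  have he' : ((e:ℤ)) ≠ 0 := by exact_mod_cast he.ne'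
  have h1 : 0 ≤ d % e := Int.emod_nonneg _ he'
  have h2 : d % e < e := Int.emod_lt_of_pos _ (by exact_mod_cast he)
  exact mul_nonneg h1 (by omega)

lemma phiF_period {e : ℕ} (d z : ℤ) : phiF e (d + (e:ℤ) * z) = phiF e d := by
  unfold phiF
  rw [Int.add_mul_emod_self_left]

lemma phiF_even {e : ℕ} (he : 0 < e) (d : ℤ) : phiF e (-d) = phiF e d := by
  have he' : ((e:ℤ)) ≠ 0 := by exact_mod_cast he.ne'
  have heZ : (0:ℤ) < e := by exact_mod_cast he
  have h1 : 0 ≤ d % e := Int.emod_nonneg _ he'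
  have h2 : d % e < e := Int.emod_lt_of_pos _ heZ
  have hneg : (-d) % e = ((e:ℤ) - d % e) % e := by
    conv_lhs => rw [show -d = (e:ℤ) - d % e + (e:ℤ) * (-(d / e) - 1) from by
      have := Int.mul_ediv_add_emod d e
      linarith]
    rw [Int.add_mul_emod_self_left]
  by_cases hz : d % e = 0
  · unfold phiF
    rw [hneg, hz]
    simp
  · have h3 : (-d) % e = (e:ℤ) - d % e := by
      rw [hneg, Int.emod_eq_of_lt (by omega) (by omega)]
    unfold phiF
    rw [h3]
    ring

lemma pair_bound {e : ℕ} (he : 0 < e) (d : ℤ) :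
    0 ≤ d * (d - (e:ℤ)) + phiF e d ∧
      (d * (d - (e:ℤ)) + phiF e d = 0 ↔ (0 ≤ d ∧ d ≤ (e:ℤ))) := by
  have he' : ((e:ℤ)) ≠ 0 := by exact_mod_cast he.ne'
  have heZ : (0:ℤ) < e := by exact_mod_cast he
  obtain ⟨q, r, hd, hr0, hre⟩ : ∃ q r : ℤ, d = (e:ℤ) * q + r ∧ 0 ≤ r ∧ r < e :=
    ⟨d / e, d % e, by have := Int.mul_ediv_add_emod d e; omega,
      Int.emod_nonneg _ he', Int.emod_lt_of_pos _ heZ⟩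
  have hmod : d % e = r := (divmod_decomp he hr0 hre hd).2
  have hphi : phiF e d = r * ((e:ℤ) - r) := by unfold phiF; rw [hmod]
  have hval : d * (d - (e:ℤ)) + phiF e d = ((e:ℤ) * q) * ((e:ℤ) * q - (e:ℤ) + 2 * r) := by
    rw [hphi, hd]
    ring
  rcases lt_trichotomy q 0 with hc | hc | hc
  · have hAle : (e:ℤ) * q ≤ -(e:ℤ) := by
      have h1 : (e:ℤ) * q ≤ (e:ℤ) * (-1) := mul_le_mul_of_nonneg_left (by omega) heZ.le
      have h2 : (e:ℤ) * (-1) = -(e:ℤ) := by ring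
      linarith
    have hX : (e:ℤ) * q - (e:ℤ) + 2 * r < 0 := by linarith
    have hpos : 0 < ((e:ℤ) * q) * ((e:ℤ) * q - (e:ℤ) + 2 * r) :=
      mul_pos_of_neg_of_neg (by linarith) hX
    have hdneg : d < 0 := by linarith
    refine ⟨by linarith, ?_, ?_⟩
    · intro hzero
      exfalso
      linarith
    · rintro ⟨hd0, _⟩
      exfalso
      linarith
  · subst hc
    have hA0 : (e:ℤ) * 0 = 0 := by ring
    have hdr : d = r := by linarith
    refine ⟨by rw [hval, hA0, zero_mul], ?_, ?_⟩
    · intro _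
      constructor <;> linarith
    · intro _
      rw [hval, hA0, zero_mul]
  · have hAge : (e:ℤ) ≤ (e:ℤ) * q := by
      have h1 : (e:ℤ) * 1 ≤ (e:ℤ) * q := mul_le_mul_of_nonneg_left (by omega) heZ.le
      linarith
    have hX : 0 ≤ (e:ℤ) * q - (e:ℤ) + 2 * r := by linarith
    have hnn : 0 ≤ ((e:ℤ) * q) * ((e:ℤ) * q - (e:ℤ) + 2 * r) := mul_nonneg (by linarith) hX
    refine ⟨by linarith, ?_, ?_⟩
    · intro hzero
      have hz2 : ((e:ℤ) * q) * ((e:ℤ) * q - (e:ℤ) + 2 * r) = 0 := by linarith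
      rcases mul_eq_zero.mp hz2 with h | h
      · exfalso
        linarith
      · constructor <;> linarith
    · rintro ⟨hd0, hde⟩
      have hr00 : r = 0 := by linarith
      have hAe : (e:ℤ) * q = (e:ℤ) := by linarith
      rw [hval, hAe, hr00]
      ring

noncomputable def phiSum (e ℓ : ℕ) (u : Fin ℓ → ℤ) : ℤ :=
  ∑ j : Fin ℓ, ∑ k : Fin ℓ, phiF e (u j - u k)

lemma phiSum_orbit {e ℓ : ℕ} (t : Fin ℓ → ℤ) (σ : Equiv.Perm (Fin ℓ)) (v : Fin ℓ → ℤ) :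
    phiSum e ℓ (fun j => t (σ j) + (e:ℤ) * v j) = phiSum e ℓ t := by
  unfold phiSum
  have h1 : ∀ j k : Fin ℓ, phiF e ((t (σ j) + (e:ℤ) * v j) - (t (σ k) + (e:ℤ) * v k))
      = phiF e (t (σ j) - t (σ k)) := by
    intro j k
    rw [show (t (σ j) + (e:ℤ) * v j) - (t (σ k) + (e:ℤ) * v k)
        = (t (σ j) - t (σ k)) + (e:ℤ) * (v j - v k) from by ring]
    exact phiF_period _ _
  calc ∑ j : Fin ℓ, ∑ k : Fin ℓ, phiF e ((t (σ j) + (e:ℤ) * v j) - (t (σ k) + (e:ℤ) * v k))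
      = ∑ j : Fin ℓ, ∑ k : Fin ℓ, phiF e (t (σ j) - t (σ k)) := by
        apply Finset.sum_congr rfl
        intro j _
        apply Finset.sum_congr rfl
        intro k _
        exact h1 j k
    _ = ∑ j : Fin ℓ, ∑ k : Fin ℓ, phiF e (t j - t k) :=
        sum_reindex σ (fun j k => phiF e (t j - t k))

lemma phiSum_eq_eps {e ℓ : ℕ} (he : 0 < e) (u : Fin ℓ → ℤ) :
    phiSum e ℓ u = ∑ j : Fin ℓ, ∑ k : Fin ℓ, epsZ j k * (2 * phiF e (u j - u k)) := by
  classical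
  set c : Fin ℓ → Fin ℓ → ℤ := fun j k => if j = k then 0 else 2 * epsZ j k - 1 with hc
  have hcanti : ∀ j k, c k j = - c j k := by
    intro j k
    by_cases hjk : j = k
    · subst hjk; simp [hc]
    · have h1 := epsZ_add hjk
      simp only [hc]
      rw [if_neg (Ne.symm hjk), if_neg hjk]
      omega
  have hzero : ∑ j : Fin ℓ, ∑ k : Fin ℓ, c j k * phiF e (u j - u k) = 0 := by
    have h : 2 * (∑ j : Fin ℓ, ∑ k : Fin ℓ, c j k * phiF e (u j - u k))
        = ∑ j : Fin ℓ, ∑ k : Fin ℓ, c j k * (phiF e (u j - u k) - phiF e (u k - u j)) :=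
      sum_pair_antisym c (fun j k => phiF e (u j - u k)) hcanti
    have h2 : ∑ j : Fin ℓ, ∑ k : Fin ℓ, c j k *
        (phiF e (u j - u k) - phiF e (u k - u j)) = 0 := by
      apply Finset.sum_eq_zero
      intro j _
      apply Finset.sum_eq_zero
      intro k _
      rw [show u k - u j = -(u j - u k) from by ring, phiF_even he]
      ring
    omega
  unfold phiSum
  have hpt : ∀ j k : Fin ℓ, epsZ j k * (2 * phiF e (u j - u k))
      = phiF e (u j - u k) + c j k * phiF e (u j - u k) := by
    intro j k
    by_cases hjk : j = k
    · subst hjk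
      have hcc : c j j = 0 := by simp [hc]
      have hp0 : phiF e (u j - u j) = 0 := by
        rw [sub_self]
        unfold phiF
        simp
      rw [hcc, epsZ_self, hp0]
      ring
    · simp only [hc]
      rw [if_neg hjk]
      ring
  have : ∑ j : Fin ℓ, ∑ k : Fin ℓ, epsZ j k * (2 * phiF e (u j - u k))
      = (∑ j : Fin ℓ, ∑ k : Fin ℓ, phiF e (u j - u k))
        + ∑ j : Fin ℓ, ∑ k : Fin ℓ, c j k * phiF e (u j - u k) := by
    rw [← Finset.sum_add_distrib]
    apply Finset.sum_congr rfl
    intro j _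
    rw [← Finset.sum_add_distrib]
    apply Finset.sum_congr rfl
    intro k _
    exact hpt j k
  omega

lemma H_bound {e ℓ : ℕ} (he : 0 < e) (u : Fin ℓ → ℤ) :
    0 ≤ 2 * Hfun e ℓ u + phiSum e ℓ u ∧
      ((2 * Hfun e ℓ u + phiSum e ℓ u = 0) ↔ memAbar e u) := by
  classical
  have hcomb : 2 * Hfun e ℓ u + phiSum e ℓ u
      = ∑ j : Fin ℓ, ∑ k : Fin ℓ,
          epsZ j k * (2 * ((u j - u k) * (u j - u k - (e:ℤ)) + phiF e (u j - u k))) := by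
    rw [phiSum_eq_eps he u]
    unfold Hfun
    rw [Finset.mul_sum, ← Finset.sum_add_distrib]
    apply Finset.sum_congr rfl
    intro j _
    rw [Finset.mul_sum, ← Finset.sum_add_distrib]
    apply Finset.sum_congr rfl
    intro k _
    ring
  have hptnn : ∀ j k : Fin ℓ,
      0 ≤ epsZ j k * (2 * ((u j - u k) * (u j - u k - (e:ℤ)) + phiF e (u j - u k))) := by
    intro j k
    have hb := (pair_bound he (u j - u k)).1
    rcases epsZ_cases j k with h | h <;> rw [h]
    · rw [zero_mul]
    · rw [one_mul]
      linarith
  have hnn : 0 ≤ 2 * Hfun e ℓ u + phiSum e ℓ u := by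
    rw [hcomb]
    exact Finset.sum_nonneg (fun j _ => Finset.sum_nonneg (fun k _ => hptnn j k))
  refine ⟨hnn, ?_⟩
  rw [hcomb]
  rw [Finset.sum_eq_zero_iff_of_nonneg
    (fun j _ => Finset.sum_nonneg (fun k _ => hptnn j k))]
  have hinner : ∀ j : Fin ℓ, ((∑ k : Fin ℓ,
      epsZ j k * (2 * ((u j - u k) * (u j - u k - (e:ℤ)) + phiF e (u j - u k)))) = 0
      ↔ ∀ k : Fin ℓ, epsZ j k * (2 * ((u j - u k) * (u j - u k - (e:ℤ))
          + phiF e (u j - u k))) = 0) := by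
    intro j
    rw [Finset.sum_eq_zero_iff_of_nonneg (fun k _ => hptnn j k)]
    simp
  constructor
  · intro hz
    have hall : ∀ j k : Fin ℓ, k ≤ j → (0 ≤ u j - u k ∧ u j - u k ≤ (e:ℤ)) := by
      intro j k hkj
      have h1 := (hinner j).mp (hz j (Finset.mem_univ j)) k
      have heps : epsZ j k = 1 := by unfold epsZ; rw [if_pos hkj]
      rw [heps, one_mul] at h1
      have h2 : (u j - u k) * (u j - u k - (e:ℤ)) + phiF e (u j - u k) = 0 := by linarith
      exact (pair_bound he (u j - u k)).2.mp h2
    constructor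
    · intro a b hab
      have := (hall b a hab).1
      omega
    · intro i j
      rcases le_total i j with hij | hij
      · have := (hall j i hij).2
        omega
      · have h1 := (hall i j hij).1
        have h2 := (hall i i le_rfl).2
        omega
  · rintro ⟨hmono, hbd⟩ j _
    rw [hinner j]
    intro k
    rcases epsZ_cases j k with h | h <;> rw [h]
    · rw [zero_mul]
    · rw [one_mul]
      have hkj : k ≤ j := by
        by_contra hcon
        unfold epsZ at h
        rw [if_neg hcon] at h
        omega
      have h1 : 0 ≤ u j - u k := by
        have := hmono hkj
        omega
      have h2 : u j - u k ≤ (e:ℤ) := by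
        have := hbd k j
        omega
      have := (pair_bound he (u j - u k)).2.mpr ⟨h1, h2⟩
      linarith

end Stmt17

open Stmt17 in
/-- for (μ; u) in the Ŵ_ℓ-orbit of (λ; t), wt_e(μ; u) is the minimum of the
e-weights over the orbit if and only if u ∈ Ā_e^ℓ. -/
theorem stmt17 (e ℓ : ℕ) (he : 2 ≤ e) (hl : 1 ≤ ℓ) (Λ : Fin ℓ → ℕ → ℕ)
    (hΛ : ∀ j, IsPartitionFun (Λ j)) (t : Fin ℓ → ℤ)
    (μ : Fin ℓ → ℕ → ℕ) (u : Fin ℓ → ℤ)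
    (h : ∃ σ : Equiv.Perm (Fin ℓ), ∃ v : Fin ℓ → ℤ,
      μ = (fun j => Λ (σ j)) ∧ u = (fun j => t (σ j) + (e : ℤ) * v j)) :
    wtPart e ℓ μ u = sInf (orbitWeights e ℓ Λ t) ↔ memAbar e u := by
  classical
  obtain ⟨σ, v, hμ, hu⟩ := h
  have he0 : 0 < e := by omega
  have hl0 : 0 < ℓ := hl
  have heZ : (0:ℤ) < e := by exact_mod_cast he0
  have he' : ((e:ℤ)) ≠ 0 := heZ.ne'
  have hinv : ∀ (σ' : Equiv.Perm (Fin ℓ)) (v' : Fin ℓ → ℤ),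
      2 * (e:ℤ) * (wtPart e ℓ (fun j => Λ (σ' j)) (fun j => t (σ' j) + (e:ℤ) * v' j) : ℤ)
        - Hfun e ℓ (fun j => t (σ' j) + (e:ℤ) * v' j) = Ifun e ℓ Λ t := by
    intro σ' v'
    exact Ifun_orbit he0 hl0 hΛ t σ' v'
  have hphi : ∀ (σ' : Equiv.Perm (Fin ℓ)) (v' : Fin ℓ → ℤ),
      phiSum e ℓ (fun j => t (σ' j) + (e:ℤ) * v' j) = phiSum e ℓ t :=
    fun σ' v' => phiSum_orbit t σ' v'
  set r : Fin ℓ → ℤ := fun j => t j % e with hr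
  set σ₀ : Equiv.Perm (Fin ℓ) := Tuple.sort r with hσ₀
  set v₀ : Fin ℓ → ℤ := fun j => -(t (σ₀ j) / e) with hv₀
  have hval : ∀ j, t (σ₀ j) + (e:ℤ) * v₀ j = r (σ₀ j) := by
    intro j
    have h1 := Int.mul_ediv_add_emod (t (σ₀ j)) e
    have h2 : (e:ℤ) * v₀ j = -((e:ℤ) * (t (σ₀ j) / e)) := by rw [hv₀]; ring
    simp only [hr]
    omega
  have hr0 : ∀ j, 0 ≤ r j := fun j => Int.emod_nonneg _ he'
  have hrlt : ∀ j, r j < e := fun j => Int.emod_lt_of_pos _ heZ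
  have hAbar₀ : memAbar e (fun j => t (σ₀ j) + (e:ℤ) * v₀ j) := by
    constructor
    · intro a b hab
      have hm : r (σ₀ a) ≤ r (σ₀ b) := Tuple.monotone_sort r hab
      show t (σ₀ a) + (e:ℤ) * v₀ a ≤ t (σ₀ b) + (e:ℤ) * v₀ b
      rw [hval a, hval b]
      exact hm
    · intro i j
      show t (σ₀ j) + (e:ℤ) * v₀ j ≤ t (σ₀ i) + (e:ℤ) * v₀ i + e
      rw [hval i, hval j]
      have hi := hr0 (σ₀ i)
      have hj := hrlt (σ₀ j)
      omega
  set w₀ : ℕ := wtPart e ℓ (fun j => Λ (σ₀ j)) (fun j => t (σ₀ j) + (e:ℤ) * v₀ j) with hw₀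
  have hmem₀ : w₀ ∈ orbitWeights e ℓ Λ t := ⟨σ₀, v₀, hw₀⟩
  have hHu₀ : 2 * Hfun e ℓ (fun j => t (σ₀ j) + (e:ℤ) * v₀ j)
      + phiSum e ℓ (fun j => t (σ₀ j) + (e:ℤ) * v₀ j) = 0 :=
    (H_bound he0 _).2.mpr hAbar₀
  have hmin : ∀ n ∈ orbitWeights e ℓ Λ t, w₀ ≤ n := by
    rintro n ⟨σ', v', rfl⟩
    have h1 := hinv σ' v'
    have h2 := hinv σ₀ v₀
    have h3 := (H_bound he0 (fun j => t (σ' j) + (e:ℤ) * v' j)).1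
    have h4 := hphi σ' v'
    have h5 := hphi σ₀ v₀
    by_contra hcon
    push_neg at hcon
    have hcast : ((wtPart e ℓ (fun j => Λ (σ' j)) (fun j => t (σ' j) + (e:ℤ) * v' j)) : ℤ)
        < (w₀ : ℤ) := by exact_mod_cast hcon
    have hmul := mul_lt_mul_of_pos_left hcast (show (0:ℤ) < 2 * (e:ℤ) by linarith)
    linarith
  have hne : (orbitWeights e ℓ Λ t).Nonempty := ⟨w₀, hmem₀⟩
  have hsInf : sInf (orbitWeights e ℓ Λ t) = w₀ :=
    le_antisymm (Nat.sInf_le hmem₀) (le_csInf hne hmin)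
  rw [hsInf]
  subst hμ
  subst hu
  have h1 := hinv σ v
  have h2 := hinv σ₀ v₀
  have h4 := hphi σ v
  have h5 := hphi σ₀ v₀
  have hbnd := H_bound he0 (fun j => t (σ j) + (e:ℤ) * v j)
  constructor
  · intro heq
    have hcast : ((wtPart e ℓ (fun j => Λ (σ j)) (fun j => t (σ j) + (e:ℤ) * v j)) : ℤ)
        = (w₀ : ℤ) := by exact_mod_cast heq
    have hmul : 2 * (e:ℤ) *
        ((wtPart e ℓ (fun j => Λ (σ j)) (fun j => t (σ j) + (e:ℤ) * v j)) : ℤ)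
        = 2 * (e:ℤ) * (w₀ : ℤ) := by rw [hcast]
    apply hbnd.2.mp
    linarith
  · intro hAb
    have hz := hbnd.2.mpr hAb
    have h2e : (2 * (e:ℤ)) ≠ 0 := by positivity
    have hmm : 2 * (e:ℤ) *
        ((wtPart e ℓ (fun j => Λ (σ j)) (fun j => t (σ j) + (e:ℤ) * v j)) : ℤ)
        = 2 * (e:ℤ) * (w₀ : ℤ) := by linarith
    have hcast := mul_left_cancel₀ h2e hmm
    exact_mod_cast hcast
end
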